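/- arXiv:2109.10136 — 7 statements merged into one kernel-verified Lean document; each statement's English description precedes it below -/
import Mathlib

section
/- For all integers a ≥ 1 and N ≥ 1, Δ_{a,N} = Π p^{min(a, ⌊N/p^e⌋)}, where the product is over all pairs (p, e) with p a prime number, e ≥ 1 an integer, and p^e ≤ N. -/
/-- `Δ_{a,N}`: the lcm of all products of at most `a` pairwise distinct nonzero
integers in `[-N, N]` whose mutual distances are at most `N`. -/
noncomputable def Delta (a N : ℕ) : ℕ :=
  ((Finset.Icc (-(N : ℤ)) (N : ℤ)).powerset.filter (fun s =>
    s.Nonempty ∧ s.card ≤ a ∧ (0 : ℤ) ∉ s ∧ ∀ x ∈ s, ∀ y ∈ s, x - y ≤ (N : ℤ))).lcm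
    (fun s => (s.prod id).natAbs)

section DeltaAux
open Finset


/-- Counting: a finset of nonzero integers, bounded by `M` in absolute value,
with pairwise differences at most `M`, has at most `M` elements. -/
lemma window_card_le (M : ℕ) (u : Finset ℤ) (h0 : (0:ℤ) ∉ u)
    (habs : ∀ y ∈ u, -(M:ℤ) ≤ y ∧ y ≤ (M:ℤ))
    (hdiff : ∀ y ∈ u, ∀ z ∈ u, y - z ≤ (M:ℤ)) :
    u.card ≤ M := by
  rcases u.eq_empty_or_nonempty with rfl | hu
  · simp
  set m := u.min' hu with hm
  have hmem : m ∈ u := u.min'_mem hu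
  rcases lt_or_ge 0 m with hpos | hneg
  · have : u ⊆ Finset.Icc 1 (M:ℤ) := by
      intro y hy
      simp only [Finset.mem_Icc]
      exact ⟨le_trans hpos (u.min'_le y hy), (habs y hy).2⟩
    calc u.card ≤ (Finset.Icc (1:ℤ) (M:ℤ)).card := Finset.card_le_card this
      _ = M := by rw [Int.card_Icc]; simp
  · have h0mem : (0:ℤ) ∈ Finset.Icc m (m + M) := by
      simp only [Finset.mem_Icc]
      exact ⟨hneg, by linarith [(habs m hmem).1]⟩
    have : u ⊆ (Finset.Icc m (m + M)).erase 0 := by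
      intro y hy
      refine Finset.mem_erase.2 ⟨fun h => h0 (h ▸ hy), ?_⟩
      simp only [Finset.mem_Icc]
      exact ⟨u.min'_le y hy, by linarith [hdiff y hy m hmem]⟩
    calc u.card ≤ ((Finset.Icc m (m + M)).erase 0).card := Finset.card_le_card this
      _ = (Finset.Icc m (m + M)).card - 1 := Finset.card_erase_of_mem h0mem
      _ = M := by rw [Int.card_Icc]; omega

lemma count_multiples_le (N : ℕ) (s : Finset ℤ)
    (hbd : ∀ x ∈ s, -(N:ℤ) ≤ x ∧ x ≤ (N:ℤ)) (h0 : (0:ℤ) ∉ s)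
    (hdiff : ∀ x ∈ s, ∀ y ∈ s, x - y ≤ (N:ℤ)) (d : ℕ) (hd : 0 < d) :
    (s.filter (fun x => (d:ℤ) ∣ x)).card ≤ N / d := by
  set t := s.filter (fun x => (d:ℤ) ∣ x) with ht
  have hdz : (0:ℤ) < (d:ℤ) := by exact_mod_cast hd
  have hmem : ∀ x ∈ t, x ∈ s ∧ (d:ℤ) ∣ x := by
    intro x hx; exact Finset.mem_filter.1 hx
  have hcancel : ∀ x ∈ t, (d:ℤ) * (x / d) = x := fun x hx =>
    Int.mul_ediv_cancel' (hmem x hx).2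
  have hND : ((N/d : ℕ) : ℤ) * d ≤ (N : ℤ) := by
    exact_mod_cast Nat.div_mul_le_self N d
  have hinj : Set.InjOn (fun x => x / (d:ℤ)) t := by
    intro x hx y hy h
    rw [← hcancel x hx, ← hcancel y hy]
    simp only at h; rw [h]
  rw [(Finset.card_image_of_injOn hinj).symm]
  apply window_card_le
  · intro h
    rcases Finset.mem_image.1 h with ⟨x, hx, hx0⟩
    have : x = 0 := by rw [← hcancel x hx, hx0, mul_zero]
    exact h0 (this ▸ (hmem x hx).1)
  · intro y hy
    rcases Finset.mem_image.1 hy with ⟨x, hx, rfl⟩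
    constructor
    · rw [Int.le_ediv_iff_mul_le hdz]
      by_contra hcon
      push_neg at hcon
      have hy := hcancel x hx
      have h2 : x / (d:ℤ) + 1 ≤ -((N/d : ℕ) : ℤ) := by nlinarith
      have hmod : (N:ℤ) < (((N/d : ℕ) : ℤ) + 1) * d := by
        have h3 := Nat.div_add_mod N d
        have h4 := Nat.mod_lt N hd
        have : N < (N/d + 1) * d := by
          calc N = d * (N/d) + N % d := h3.symm
            _ < d * (N/d) + d := by omega
            _ = (N/d + 1) * d := by ring
        exact_mod_cast this
      have h5 := (hbd x (hmem x hx).1).1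
      nlinarith [mul_le_mul_of_nonneg_left h2 (le_of_lt hdz)]
    · have h2 : x / (d:ℤ) ≤ (N:ℤ) / d :=
        Int.ediv_le_ediv hdz (hbd x (hmem x hx).1).2
      rwa [Int.natCast_ediv]
  · intro y hy z hz
    rcases Finset.mem_image.1 hy with ⟨x, hx, rfl⟩
    rcases Finset.mem_image.1 hz with ⟨w, hw, rfl⟩
    rw [Int.natCast_ediv, Int.le_ediv_iff_mul_le hdz, sub_mul]
    rw [mul_comm ((x:ℤ)/d) d, mul_comm ((w:ℤ)/d) d, hcancel x hx, hcancel w hw]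
    exact hdiff x (hmem x hx).1 w (hmem w hw).1

lemma fact_eq_card {N q n : ℕ} (hq : q.Prime) (hn : n ≠ 0) (hnN : n ≤ N) :
    n.factorization q = ((Finset.Icc 1 N).filter (fun e => q^e ∣ n)).card := by
  have hvN : n.factorization q ≤ N := by
    have h1 : q ^ n.factorization q ∣ n := Nat.ordProj_dvd n q
    have h2 : q ^ n.factorization q ≤ N := le_trans (Nat.le_of_dvd (Nat.pos_of_ne_zero hn) h1) hnN
    have h3 : n.factorization q < q ^ n.factorization q := Nat.lt_pow_self hq.one_lt
    omega
  have : (Finset.Icc 1 N).filter (fun e => q^e ∣ n) = Finset.Icc 1 (n.factorization q) := by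
    ext e
    simp only [Finset.mem_filter, Finset.mem_Icc]
    constructor
    · rintro ⟨⟨h1, _⟩, h2⟩
      exact ⟨h1, (hq.pow_dvd_iff_le_factorization hn).1 h2⟩
    · rintro ⟨h1, h2⟩
      exact ⟨⟨h1, le_trans h2 hvN⟩, (hq.pow_dvd_iff_le_factorization hn).2 h2⟩
  rw [this, Nat.card_Icc]
  omega

lemma sum_fact_le (a N q : ℕ) (hq : q.Prime) (s : Finset ℤ)
    (hbd : ∀ x ∈ s, -(N:ℤ) ≤ x ∧ x ≤ (N:ℤ)) (h0 : (0:ℤ) ∉ s)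
    (hdiff : ∀ x ∈ s, ∀ y ∈ s, x - y ≤ (N:ℤ)) (hcard : s.card ≤ a) :
    ∑ x ∈ s, (x.natAbs).factorization q
      ≤ ∑ e ∈ (Finset.Icc 1 N).filter (fun e => q^e ≤ N), min a (N / q^e) := by
  have habs : ∀ x ∈ s, x.natAbs ≠ 0 ∧ x.natAbs ≤ N := by
    intro x hx
    constructor
    · simp only [ne_eq, Int.natAbs_eq_zero]; intro h; exact h0 (h ▸ hx)
    · have := (hbd x hx).1; have := (hbd x hx).2
      omega
  have step1 : ∑ x ∈ s, (x.natAbs).factorization q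
      = ∑ e ∈ Finset.Icc 1 N, (s.filter (fun x => q^e ∣ x.natAbs)).card := by
    calc ∑ x ∈ s, (x.natAbs).factorization q
        = ∑ x ∈ s, ((Finset.Icc 1 N).filter (fun e => q^e ∣ x.natAbs)).card :=
          Finset.sum_congr rfl (fun x hx => fact_eq_card hq (habs x hx).1 (habs x hx).2)
      _ = ∑ x ∈ s, ∑ e ∈ Finset.Icc 1 N, if q^e ∣ x.natAbs then 1 else 0 := by
          simp only [Finset.card_filter]
      _ = ∑ e ∈ Finset.Icc 1 N, ∑ x ∈ s, if q^e ∣ x.natAbs then 1 else 0 :=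
          Finset.sum_comm
      _ = ∑ e ∈ Finset.Icc 1 N, (s.filter (fun x => q^e ∣ x.natAbs)).card := by
          simp only [Finset.card_filter]
  rw [step1, ← Finset.sum_filter_add_sum_filter_not (Finset.Icc 1 N) (fun e => q^e ≤ N)]
  have hzero : ∑ e ∈ (Finset.Icc 1 N).filter (fun e => ¬ q^e ≤ N),
      (s.filter (fun x => q^e ∣ x.natAbs)).card = 0 := by
    apply Finset.sum_eq_zero
    intro e he
    rw [Finset.card_eq_zero, Finset.filter_eq_empty_iff]
    intro x hx hdvd
    have h1 := (habs x hx).1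
    have h2 := (habs x hx).2
    have := Nat.le_of_dvd (Nat.pos_of_ne_zero h1) hdvd
    have := (Finset.mem_filter.1 he).2
    omega
  rw [hzero, add_zero]
  apply Finset.sum_le_sum
  intro e he
  have hfeq : s.filter (fun x => q^e ∣ x.natAbs) = s.filter (fun x => ((q^e : ℕ) : ℤ) ∣ x) := by
    apply Finset.filter_congr
    intro x _
    exact Int.natCast_dvd.symm
  rw [hfeq]
  refine le_min ?_ ?_
  · exact le_trans (Finset.card_le_card (Finset.filter_subset _ _)) hcard
  · exact count_multiples_le N s hbd h0 hdiff (q^e) (pow_pos hq.pos e)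

lemma Rfact (a N q : ℕ) (hq : q.Prime) :
    (∏ pe ∈ ((Finset.range (N + 1)) ×ˢ (Finset.Icc 1 N)).filter
        (fun pe => pe.1.Prime ∧ pe.1 ^ pe.2 ≤ N),
      pe.1 ^ (min a (N / pe.1 ^ pe.2))).factorization q
    = ∑ e ∈ (Finset.Icc 1 N).filter (fun e => q^e ≤ N), min a (N / q^e) := by
  set T := ((Finset.range (N + 1)) ×ˢ (Finset.Icc 1 N)).filter
      (fun pe => pe.1.Prime ∧ pe.1 ^ pe.2 ≤ N) with hT
  have hprime : ∀ pe ∈ T, pe.1.Prime := by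
    intro pe hpe
    exact ((Finset.mem_filter.1 hpe).2).1
  have hne : ∀ pe ∈ T, pe.1 ^ (min a (N / pe.1 ^ pe.2)) ≠ 0 :=
    fun pe hpe => pow_ne_zero _ (hprime pe hpe).ne_zero
  rw [Nat.factorization_prod hne]
  rw [Finset.sum_apply']
  have hterm : ∀ pe ∈ T, (pe.1 ^ (min a (N / pe.1 ^ pe.2))).factorization q
      = if pe.1 = q then min a (N / pe.1 ^ pe.2) else 0 := by
    intro pe hpe
    rw [(hprime pe hpe).factorization_pow, Finsupp.single_apply]
  rw [Finset.sum_congr rfl hterm, ← Finset.sum_filter]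
  have hset : T.filter (fun pe => pe.1 = q)
      = ((Finset.Icc 1 N).filter (fun e => q^e ≤ N)).image (fun e => (q, e)) := by
    ext pe
    rcases pe with ⟨p, e⟩
    simp only [hT, Finset.mem_filter, Finset.mem_image, Finset.mem_product,
      Finset.mem_range, Finset.mem_Icc]
    constructor
    · rintro ⟨⟨⟨hp1, he1⟩, hp2, hp3⟩, rfl⟩
      exact ⟨e, ⟨he1, hp3⟩, rfl⟩
    · rintro ⟨e', ⟨he1, he2⟩, heq⟩
      obtain ⟨rfl, rfl⟩ : q = p ∧ e' = e := by
        constructor <;> [exact congrArg Prod.fst heq; exact congrArg Prod.snd heq]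
      have hqN : q ≤ q ^ e' := Nat.le_self_pow (by omega) q
      exact ⟨⟨⟨by omega, he1⟩, hq, he2⟩, rfl⟩
  rw [hset, Finset.sum_image (fun x _ y _ h => (Prod.ext_iff.1 h).2)]

lemma tele_sum (c : ℕ → ℕ) (hc : ∀ i, c (i+1) ≤ c i) (E : ℕ) :
    ∑ i ∈ Finset.range E, (c (i+1) - c (i+2)) = c 1 - c (E+1) := by
  induction E with
  | zero => simp
  | succ E ih =>
    rw [Finset.sum_range_succ, ih]
    have h1 : c (E+2) ≤ c (E+1) := hc _
    have h2 : c (E+1) ≤ c 1 := antitone_nat_of_succ_le hc (by omega)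
    have h3 : c (E+1+1) = c (E+2) := by norm_num
    omega

lemma tele_abel (c : ℕ → ℕ) (hc : ∀ i, c (i+1) ≤ c i) (E : ℕ) :
    ∑ i ∈ Finset.range E, c (i+1)
      ≤ ∑ i ∈ Finset.range E, (i+1) * (c (i+1) - c (i+2)) + E * c (E+1) := by
  induction E with
  | zero => simp
  | succ E ih =>
    rw [Finset.sum_range_succ, Finset.sum_range_succ (f := fun i => (i+1) * (c (i+1) - c (i+2)))]
    have key : (E+1) * (c (E+1) - c (E+2)) + (E+1) * c (E+2) = (E+1) * c (E+1) := by
      rw [← Nat.mul_add, Nat.sub_add_cancel (hc _)]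
    have key2 : (E+1) * c (E+1) = E * c (E+1) + c (E+1) := by ring
    have key3 : (E+1) * c (E+2) = E * c (E+2) + c (E+2) := by ring
    have key4 : c (E+1+1) = c (E+2) := by norm_num
    have key5 : (E+1) * c (E+1+1) = (E+1) * c (E+2) := by rw [key4]
    omega

lemma sum_Icc_one (f : ℕ → ℕ) (E : ℕ) :
    ∑ e ∈ Finset.Icc 1 E, f e = ∑ i ∈ Finset.range E, f (i+1) := by
  rw [← Finset.Ico_add_one_right_eq_Icc, Finset.sum_Ico_eq_sum_range]
  simp [add_comm]

lemma exists_witness (a N q : ℕ) (ha : 1 ≤ a) (hN : 1 ≤ N) (hq : q.Prime) (hqN : q ≤ N) :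
    ∃ s : Finset ℤ, (∀ x ∈ s, 1 ≤ x ∧ x ≤ (N:ℤ)) ∧ s.Nonempty ∧ s.card ≤ a ∧
      (∑ e ∈ (Finset.Icc 1 N).filter (fun e => q^e ≤ N), min a (N / q^e))
        ≤ ∑ x ∈ s, (x.natAbs).factorization q := by
  have hq1 : 1 < q := hq.one_lt
  set E := Nat.log q N with hE
  set c : ℕ → ℕ := fun e => min a (N / q^e) with hc
  have hcanti : ∀ i, c (i+1) ≤ c i := by
    intro i
    have : N / q^(i+1) ≤ N / q^i :=
      Nat.div_le_div_left (Nat.pow_le_pow_right (le_of_lt hq1) (by omega)) (pow_pos hq.pos i)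
    simp only [hc]; omega
  have hdiv_succ : ∀ e, N / q^e / q = N / q^(e+1) := by
    intro e; rw [Nat.div_div_eq_div_mul, ← pow_succ]
  -- the pool of admissible k's at level e
  set A : ℕ → Finset ℕ := fun e => (Finset.Icc 1 (N / q^e)).filter (fun k => ¬ q ∣ k) with hA
  have hAcard : ∀ e, (A e).card = N / q^e - N / q^(e+1) := by
    intro e
    have hIoc : Finset.Icc 1 (N / q^e) = Finset.Ioc 0 (N / q^e) := rfl
    have h1 : ((Finset.Icc 1 (N / q^e)).filter (fun k => q ∣ k)).card = N / q^e / q := by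
      rw [hIoc]; exact Nat.Ioc_filter_dvd_card_eq_div _ _
    have h2 := Finset.card_filter_add_card_filter_not
      (s := Finset.Icc 1 (N / q^e)) (p := fun k => q ∣ k)
    rw [Nat.card_Icc] at h2
    simp only [hA]
    rw [← hdiv_succ e]
    omega
  have hchoice : ∀ e, ∃ t ⊆ A e, t.card = min (c e - c (e+1)) ((A e).card) :=
    fun e => Finset.exists_subset_card_eq (min_le_right _ _)
  choose K hK1 hK2 using hchoice
  have hcK : ∀ e, (K e).card = c e - c (e+1) := by
    intro e
    rw [hK2, hAcard]
    have h1 : N / q^(e+1) ≤ N / q^e :=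
      Nat.div_le_div_left (Nat.pow_le_pow_right (le_of_lt hq1) (by omega)) (pow_pos hq.pos e)
    simp only [hc]
    omega
  have hKmem : ∀ e, ∀ k ∈ K e, 1 ≤ k ∧ k ≤ N / q^e ∧ ¬ q ∣ k := by
    intro e k hk
    have := hK1 e hk
    simp only [hA, Finset.mem_filter, Finset.mem_Icc] at this
    exact ⟨this.1.1, this.1.2, this.2⟩
  have hval : ∀ e, ∀ k ∈ K e, ((k * q^e : ℕ)).factorization q = e := by
    intro e k hk
    obtain ⟨h1, _, h3⟩ := hKmem e k hk
    rw [Nat.factorization_mul (by omega) (pow_ne_zero _ hq.ne_zero),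
      Finsupp.add_apply, Nat.factorization_eq_zero_of_not_dvd h3,
      hq.factorization_pow, Finsupp.single_apply]
    simp
  set s : Finset ℤ := (Finset.Icc 1 E).biUnion
    (fun e => (K e).image (fun k => ((k * q^e : ℕ) : ℤ))) with hs
  have hmuleq : ∀ e, ∀ k ∈ K e, 1 ≤ k * q^e ∧ k * q^e ≤ N := by
    intro e k hk
    obtain ⟨h1, h2, _⟩ := hKmem e k hk
    constructor
    · exact Nat.one_le_iff_ne_zero.2 (Nat.mul_ne_zero (by omega) (pow_ne_zero _ hq.ne_zero))
    · calc k * q^e ≤ (N / q^e) * q^e := Nat.mul_le_mul_right _ h2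
        _ ≤ N := Nat.div_mul_le_self _ _
  have hsbound : ∀ x ∈ s, 1 ≤ x ∧ x ≤ (N:ℤ) := by
    intro x hx
    simp only [hs, Finset.mem_biUnion, Finset.mem_image] at hx
    obtain ⟨e, he, k, hk, rfl⟩ := hx
    obtain ⟨h1, h2⟩ := hmuleq e k hk
    exact ⟨by exact_mod_cast h1, by exact_mod_cast h2⟩
  -- disjointness via the exact valuation
  have hdisj : (↑(Finset.Icc 1 E) : Set ℕ).PairwiseDisjoint
      (fun e => (K e).image (fun k => ((k * q^e : ℕ) : ℤ))) := by
    intro e he e' he' hne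
    simp only [Finset.disjoint_left]
    intro x hx hx'
    simp only [Finset.mem_image] at hx hx'
    obtain ⟨k, hk, hkx⟩ := hx
    obtain ⟨k', hk', hkx'⟩ := hx'
    have : (k * q^e : ℕ) = (k' * q^(e') : ℕ) := by
      have := hkx.trans hkx'.symm
      exact_mod_cast this
    have h1 := hval e k hk
    have h2 := hval e' k' hk'
    rw [this] at h1
    exact hne (h1.symm.trans h2 ▸ rfl)
  have hinj : ∀ e, Set.InjOn (fun k => ((k * q^e : ℕ) : ℤ)) (K e) := by
    intro e k hk k' hk' h
    simp only at h
    have h' : k * q^e = k' * q^e := by exact_mod_cast h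
    exact Nat.eq_of_mul_eq_mul_right (pow_pos hq.pos e) h'
  have hcards : s.card = c 1 - c (E+1) := by
    rw [hs, Finset.card_biUnion (fun e he e' he' hne => hdisj (by exact_mod_cast he) (by exact_mod_cast he') hne)]
    rw [Finset.sum_congr rfl (fun e he => (Finset.card_image_of_injOn (hinj e)).trans (hcK e))]
    rw [sum_Icc_one (fun e => c e - c (e+1)) E]
    exact tele_sum c hcanti E
  have hcE1 : c (E+1) = 0 := by
    have : N < q^(E+1) := Nat.lt_pow_succ_log_self hq1 N
    simp only [hc, Nat.div_eq_of_lt this, _root_.min_zero]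
  have hc1 : 1 ≤ c 1 := by
    have h1 : 1 ≤ N / q := (Nat.one_le_div_iff hq.pos).2 hqN
    simp only [hc, pow_one]
    omega
  refine ⟨s, hsbound, ?_, ?_, ?_⟩
  · rw [← Finset.card_pos, hcards]; omega
  · rw [hcards]
    have : c 1 ≤ a := min_le_left _ _
    omega
  · -- the filter set is Icc 1 E
    have hD : (Finset.Icc 1 N).filter (fun e => q^e ≤ N) = Finset.Icc 1 E := by
      ext e
      simp only [Finset.mem_filter, Finset.mem_Icc]
      constructor
      · rintro ⟨⟨h1, h2⟩, h3⟩
        exact ⟨h1, (Nat.le_log_iff_pow_le hq1 (by omega)).2 h3⟩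
      · rintro ⟨h1, h2⟩
        have h3 : q^e ≤ N := (Nat.le_log_iff_pow_le hq1 (by omega)).1 h2
        have h4 : E ≤ N := le_trans (Nat.log_le_self q N) (le_refl N)
        exact ⟨⟨h1, by omega⟩, h3⟩
    rw [hD]
    have hsum : ∑ x ∈ s, (x.natAbs).factorization q
        = ∑ e ∈ Finset.Icc 1 E, (c e - c (e+1)) * e := by
      rw [hs, Finset.sum_biUnion hdisj]
      apply Finset.sum_congr rfl
      intro e he
      rw [Finset.sum_image (fun k hk k' hk' h => hinj e hk hk' h)]
      have : ∀ k ∈ K e, (((k * q^e : ℕ) : ℤ).natAbs).factorization q = e := by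
        intro k hk
        rw [Int.natAbs_natCast]
        exact hval e k hk
      rw [Finset.sum_congr rfl this, Finset.sum_const, smul_eq_mul, hcK e]
    rw [hsum, sum_Icc_one c E, sum_Icc_one (fun e => (c e - c (e+1)) * e) E]
    have := tele_abel c hcanti E
    rw [hcE1, Nat.mul_zero, Nat.add_zero] at this
    calc ∑ i ∈ Finset.range E, c (i+1)
        ≤ ∑ i ∈ Finset.range E, (i+1) * (c (i+1) - c (i+2)) := this
      _ = ∑ i ∈ Finset.range E, (c (i+1) - c (i+1+1)) * (i+1) := by
          apply Finset.sum_congr rfl; intro i _; ring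

lemma prod_ne_zero' (s : Finset ℤ) (h0 : (0:ℤ) ∉ s) : s.prod id ≠ 0 :=
  Finset.prod_ne_zero_iff.2 (fun x hx h => h0 (h ▸ hx))

lemma natAbs_prod_fact (s : Finset ℤ) (h0 : (0:ℤ) ∉ s) (q : ℕ) :
    ((s.prod id).natAbs).factorization q = ∑ x ∈ s, (x.natAbs).factorization q := by
  have h1 : (s.prod id).natAbs = ∏ x ∈ s, x.natAbs := by
    rw [show s.prod id = ∏ x ∈ s, x from rfl]
    exact_mod_cast map_prod Int.natAbsHom (fun x => x) s
  rw [h1, Nat.factorization_prod (fun x hx h => h0 ((Int.natAbs_eq_zero.1 h) ▸ hx)),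
    Finset.sum_apply']

lemma delta_ne_zero (a N : ℕ) : Delta a N ≠ 0 := by
  intro h
  unfold Delta at h
  rw [Finset.lcm_eq_zero_iff] at h
  obtain ⟨s, hs, hs0⟩ := h
  simp only [Finset.coe_filter, Set.mem_setOf_eq, Finset.mem_filter, Finset.mem_powerset] at hs
  exact prod_ne_zero' s hs.2.2.2.1 (Int.natAbs_eq_zero.1 hs0)

lemma lower_le_delta (a N q : ℕ) (ha : 1 ≤ a) (hN : 1 ≤ N) (hq : q.Prime) :
    ∑ e ∈ (Finset.Icc 1 N).filter (fun e => q^e ≤ N), min a (N / q^e)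
      ≤ (Delta a N).factorization q := by
  by_cases hqN : q ≤ N
  · obtain ⟨s, hbd', hne, hcard, hsum⟩ := exists_witness a N q ha hN hq hqN
    have hbd : ∀ x ∈ s, -(N:ℤ) ≤ x ∧ x ≤ (N:ℤ) := by
      intro x hx
      have h1 := (hbd' x hx).1
      have h2 := (hbd' x hx).2
      constructor
      · have : (0:ℤ) ≤ N := by exact_mod_cast Nat.zero_le N
        linarith
      · exact h2
    have h0 : (0:ℤ) ∉ s := by
      intro h
      have := (hbd' 0 h).1
      norm_num at this
    have hmem : s ∈ ((Finset.Icc (-(N : ℤ)) (N : ℤ)).powerset.filter (fun s =>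
        s.Nonempty ∧ s.card ≤ a ∧ (0 : ℤ) ∉ s ∧ ∀ x ∈ s, ∀ y ∈ s, x - y ≤ (N : ℤ))) := by
      rw [Finset.mem_filter, Finset.mem_powerset]
      refine ⟨fun x hx => Finset.mem_Icc.2 (hbd x hx), hne, hcard, h0, ?_⟩
      intro x hx y hy
      have h1 := (hbd' x hx).2
      have h2 := (hbd' y hy).1
      linarith
    have hdvd : (s.prod id).natAbs ∣ Delta a N := Finset.dvd_lcm hmem
    have hvne : (s.prod id).natAbs ≠ 0 :=
      fun h => prod_ne_zero' s h0 (Int.natAbs_eq_zero.1 h)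
    have hle := (Nat.factorization_le_iff_dvd hvne (delta_ne_zero a N)).2 hdvd
    have hle2 := Finsupp.le_def.1 hle q
    rw [natAbs_prod_fact s h0 q] at hle2
    exact le_trans hsum hle2
  · have hempty : (Finset.Icc 1 N).filter (fun e => q^e ≤ N) = ∅ := by
      rw [Finset.filter_eq_empty_iff]
      intro e he
      rw [Finset.mem_Icc] at he
      have : q ≤ q^e := Nat.le_self_pow (by omega) q
      omega
    rw [hempty]
    simp


end DeltaAux

/-- `Δ_{a,N} = ∏_{p^e ≤ N} p^{min(a, ⌊N/p^e⌋)}`, the product being over prime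
powers `p^e ≤ N` with `e ≥ 1`. -/
theorem stmt8 (a N : ℕ) (ha : 1 ≤ a) (hN : 1 ≤ N) :
    Delta a N = ∏ pe ∈ ((Finset.range (N + 1)) ×ˢ (Finset.Icc 1 N)).filter
        (fun pe => pe.1.Prime ∧ pe.1 ^ pe.2 ≤ N),
      pe.1 ^ (min a (N / pe.1 ^ pe.2)) := by
  have hRne : (∏ pe ∈ ((Finset.range (N + 1)) ×ˢ (Finset.Icc 1 N)).filter
        (fun pe => pe.1.Prime ∧ pe.1 ^ pe.2 ≤ N),
      pe.1 ^ (min a (N / pe.1 ^ pe.2))) ≠ 0 := by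
    apply Finset.prod_ne_zero_iff.2
    intro pe hpe
    exact pow_ne_zero _ ((Finset.mem_filter.1 hpe).2.1).ne_zero
  apply Nat.dvd_antisymm
  · apply Finset.lcm_dvd
    intro s hs
    rw [Finset.mem_filter, Finset.mem_powerset] at hs
    obtain ⟨hsub, hne, hcard, h0, hdiff⟩ := hs
    have hbd : ∀ x ∈ s, -(N:ℤ) ≤ x ∧ x ≤ (N:ℤ) := by
      intro x hx
      have := hsub hx
      rw [Finset.mem_Icc] at this
      exact this
    have hv : (s.prod id).natAbs ≠ 0 :=
      fun h => prod_ne_zero' s h0 (Int.natAbs_eq_zero.1 h)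
    rw [← Nat.factorization_le_iff_dvd hv hRne, Finsupp.le_def]
    intro p
    by_cases hp : p.Prime
    · rw [natAbs_prod_fact s h0 p, Rfact a N p hp]
      exact sum_fact_le a N p hp s hbd h0 hdiff hcard
    · rw [Nat.factorization_eq_zero_of_not_prime _ hp]
      exact Nat.zero_le _
  · rw [← Nat.factorization_le_iff_dvd hRne (delta_ne_zero a N), Finsupp.le_def]
    intro p
    by_cases hp : p.Prime
    · rw [Rfact a N p hp]
      exact lower_le_delta a N p ha hN hp
    · rw [Nat.factorization_eq_zero_of_not_prime _ hp]
      exact Nat.zero_le _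
end

section
/- For every positive integer N, the least common multiple of the binomial coefficients C(N, i) for 0 ≤ i ≤ N equals d_{N+1}/(N+1), where d_{N+1} = lcm(1, 2, …, N+1). -/
open Nat Finset

-- key valuation lemma: v_p(k) + v_p(C(n,k)) ≤ log_p n
lemma key_val {p n k : ℕ} (hp : p.Prime) (hk : 1 ≤ k) (hkn : k ≤ n) :
    k.factorization p + (n.choose k).factorization p ≤ Nat.log p n := by
  set a := k.factorization p with ha
  have hk0 : k ≠ 0 := by omega
  have hpa : p ^ a ∣ k := Nat.ordProj_dvd k p
  have haln : a ≤ Nat.log p n :=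
    Nat.le_log_of_pow_le hp.one_lt ((Nat.le_of_dvd (by omega) hpa).trans hkn)
  have hbound : (n.choose k).factorization p ≤ Nat.log p n - a := by
    have hpos := Nat.choose_pos hkn
    rw [Nat.factorization_def _ hp, @padicValNat_def _ ⟨hp⟩ _ hpos.ne']
    rw [← Nat.cast_le (α := ℕ∞), ← FiniteMultiplicity.emultiplicity_eq_multiplicity]
    · rw [hp.emultiplicity_choose hkn (lt_add_one (Nat.log p n)), Nat.cast_le]
      have hsub : (Finset.Ico 1 (Nat.log p n + 1)).filter
          (fun i => p ^ i ≤ k % p ^ i + (n - k) % p ^ i)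
          ⊆ Finset.Ico (a + 1) (Nat.log p n + 1) := by
        intro i hi
        simp only [Finset.mem_filter, Finset.mem_Ico] at hi ⊢
        refine ⟨?_, hi.1.2⟩
        by_contra hia
        push_neg at hia
        have : p ^ i ∣ k := dvd_trans (pow_dvd_pow p (by omega)) hpa
        have hppos : 0 < p ^ i := Nat.pow_pos (n := i) hp.pos
        have h0 : k % p ^ i = 0 := Nat.mod_eq_zero_of_dvd this
        have h1 : (n - k) % p ^ i < p ^ i := Nat.mod_lt _ hppos
        omega
      calc _ ≤ (Finset.Ico (a + 1) (Nat.log p n + 1)).card := Finset.card_le_card hsub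
        _ = Nat.log p n - a := by rw [Nat.card_Ico]; omega
    · exact Nat.finiteMultiplicity_iff.2 ⟨hp.ne_one, hpos⟩
  omega

-- k * C(n,k) divides lcm(1..n)
lemma mul_choose_dvd_lcm {n k : ℕ} (hk : 1 ≤ k) (hkn : k ≤ n) :
    k * n.choose k ∣ (Finset.Icc 1 n).lcm id := by
  have hn0 : n ≠ 0 := by omega
  have hcpos : 0 < n.choose k := Nat.choose_pos hkn
  have hd0 : (Finset.Icc 1 n).lcm id ≠ 0 := by
    rw [Ne, Finset.lcm_eq_zero_iff]
    rintro ⟨x, hx, hx0⟩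
    simp only [Finset.coe_Icc, Set.mem_Icc, Finset.mem_Icc, id_eq] at hx hx0
    omega
  have hm0 : k * n.choose k ≠ 0 := by positivity
  rw [← Nat.factorization_le_iff_dvd hm0 hd0]
  intro p
  by_cases hp : p.Prime
  · rw [Nat.factorization_mul (by omega) hcpos.ne']
    simp only [Finsupp.coe_add, Pi.add_apply]
    refine (key_val hp hk hkn).trans ?_
    rcases Nat.eq_zero_or_pos (Nat.log p n) with h | h
    · simp [h]
    · have hdvd : p ^ Nat.log p n ∣ (Finset.Icc 1 n).lcm id := by
        refine Finset.dvd_lcm ?_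
        simp only [Finset.mem_Icc]
        exact ⟨Nat.one_le_pow _ _ hp.pos, Nat.pow_log_le_self p hn0⟩
      exact (Nat.Prime.pow_dvd_iff_le_factorization hp hd0).1 hdvd
  · simp [Nat.factorization_eq_zero_of_not_prime _ hp]

-- lcm of constant multiples
lemma lcm_mul_const {s : Finset ℕ} (hs : s.Nonempty) (f : ℕ → ℕ) (c : ℕ) :
    s.lcm (fun i => f i * c) = s.lcm f * c := by
  induction hs using Finset.Nonempty.cons_induction with
  | singleton a => simp
  | cons a s ha hs ih =>
      rw [Finset.cons_eq_insert, Finset.lcm_insert, Finset.lcm_insert, ih, _root_.lcm_mul_right]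
      simp

/-- Lemma 4 of the paper (Farhi): the lcm of the binomial coefficients
`C(N,0), …, C(N,N)` equals `d_{N+1}/(N+1)` where `d_{N+1} = lcm(1, …, N+1)`
(stated multiplicatively). -/
theorem stmt10 (N : ℕ) (hN : 1 ≤ N) :
    (Finset.range (N + 1)).lcm (fun i => Nat.choose N i) * (N + 1)
      = (Finset.Icc 1 (N + 1)).lcm id := by
  apply Nat.dvd_antisymm
  · -- L * (N+1) ∣ d
    rw [← lcm_mul_const ⟨0, Finset.mem_range.2 (by omega)⟩]
    apply Finset.lcm_dvd
    intro i hi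
    rw [Finset.mem_range] at hi
    have hid : N.choose i * (N + 1) = (i + 1) * (N + 1).choose (i + 1) := by
      rw [mul_comm, Nat.add_one_mul_choose_eq, mul_comm]
    rw [hid]
    exact mul_choose_dvd_lcm (by omega) (by omega)
  · -- d ∣ L * (N+1)
    apply Finset.lcm_dvd
    intro m hm
    rw [Finset.mem_Icc] at hm
    obtain ⟨hm1, hm2⟩ := hm
    have h1 : (m : ℕ) ∣ (N + 1).choose m * m := dvd_mul_left _ _
    have h2 : (N + 1).choose m * m = (N + 1) * N.choose (m - 1) := by
      have := Nat.add_one_mul_choose_eq N (m - 1)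
      simp only [Nat.succ_eq_add_one, show m - 1 + 1 = m by omega] at this
      omega
    have h3 : (N + 1) * N.choose (m - 1) ∣
        (Finset.range (N + 1)).lcm (fun i => Nat.choose N i) * (N + 1) := by
      rw [mul_comm]
      exact Nat.mul_dvd_mul (Finset.dvd_lcm (Finset.mem_range.2 (by omega))) dvd_rfl
    simpa [id] using h1.trans (h2 ▸ h3)
end

section
/- With P_{k,i} defined from arbitrary real coefficients c_{i,j} as in the recursion below, for every integer k ≥ 1 and every i with 1 ≤ i ≤ a: P_{k,i}(z) = Σ_{t=1−k}^{n+1−k} z^t · ( Σ_{I=i}^{min(a, i+k−1)} c_{I, t+k−1} · (−1)^{I−i} · Σ_{h ∈ H_{I−i,k}} κ(t+k−1, k, h) ). -/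
/-- `famA g k i` is the polynomial `z^{k-1} P_{k,i}(z)` where `P_{1,i} = g i` and
`P_{k,i} = P'_{k-1,i} - (1/z) P_{k-1,i+1}`; equivalently it satisfies the
recursion `A_{k,i} = -(k-2) A_{k-1,i} + z A'_{k-1,i} - A_{k-1,i+1}`. -/
noncomputable def famA {R : Type*} [CommRing R] (g : ℕ → Polynomial R) :
    ℕ → ℕ → Polynomial R
  | 0, _ => 0
  | 1, i => g i
  | (k + 2), i =>
      -(Polynomial.C ((k : ℕ) : R) * famA g (k + 1) i)
        + Polynomial.X * (famA g (k + 1) i).derivative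
        - famA g (k + 1) (i + 1)

/-- `H_{ℓ,k}`: tuples `(h₀, …, h_ℓ)` of positive integers with `h₀ + ⋯ + h_ℓ = k`. -/
def Hset (ℓ k : ℕ) : Finset (Fin (ℓ + 1) → ℕ) :=
  (Fintype.piFinset fun _ : Fin (ℓ + 1) => Finset.Icc 1 k).filter (fun h => ∑ i, h i = k)

/-- `κ(T,k,h) = (T(T-1)⋯(T-k+2)) / ∏_{i=0}^{ℓ-1} (T+1-∑_{j≤i} h_j)`, with the
convention that a factor vanishing in both numerator and denominator is omitted
from both: since the denominator factors are distinct factors of the numerator,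
this equals the product of the remaining numerator factors. -/
def kappa (T : ℤ) (k : ℕ) {ℓ : ℕ} (h : Fin (ℓ + 1) → ℕ) : ℤ :=
  ∏ m ∈ Finset.range (k - 1) \
      ((Finset.range ℓ).image fun i =>
        (∑ j ∈ Finset.univ.filter (fun j : Fin (ℓ + 1) => (j : ℕ) ≤ i), h j) - 1),
    (T - (m : ℤ))


lemma mem_Hset {ℓ k : ℕ} {h : Fin (ℓ+1) → ℕ} :
    h ∈ Hset ℓ k ↔ (∀ i, 1 ≤ h i ∧ h i ≤ k) ∧ ∑ i, h i = k := by
  simp [Hset, Fintype.mem_piFinset, Finset.mem_filter, Finset.mem_Icc, and_comm]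

lemma Hset_eq_empty {ℓ k : ℕ} (hk : k ≤ ℓ) : Hset ℓ k = ∅ := by
  ext h
  simp only [mem_Hset, Finset.notMem_empty, iff_false, not_and]
  intro h1 hs
  have : ℓ + 1 ≤ k := by
    calc ℓ + 1 = ∑ _i : Fin (ℓ+1), 1 := by simp
    _ ≤ ∑ i, h i := Finset.sum_le_sum fun i _ => (h1 i).1
    _ = k := hs
  omega

lemma Hset_zero {k : ℕ} (hk : 1 ≤ k) : Hset 0 k = {fun _ => k} := by
  ext h
  simp only [mem_Hset, Finset.mem_singleton]
  constructor
  · rintro ⟨-, hs⟩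
    funext j
    have : ∑ i, h i = h 0 := by simp [Fin.sum_univ_one]
    have hj : j = 0 := Fin.fin_one_eq_zero j
    rw [hj]; omega
  · rintro rfl
    simp [Fin.sum_univ_one, hk]

def Dset {ℓ : ℕ} (h : Fin (ℓ+1) → ℕ) : Finset ℕ :=
  (Finset.range ℓ).image fun i =>
    (∑ j ∈ Finset.univ.filter (fun j : Fin (ℓ + 1) => (j : ℕ) ≤ i), h j) - 1

lemma kappa_eq (T : ℤ) (k : ℕ) {ℓ : ℕ} (h : Fin (ℓ+1) → ℕ) :
    kappa T k h = ∏ m ∈ Finset.range (k - 1) \ Dset h, (T - (m : ℤ)) := rfl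

lemma psum_pos {ℓ k : ℕ} {h : Fin (ℓ+1) → ℕ} (hm : h ∈ Hset ℓ k) (i : ℕ) :
    1 ≤ ∑ j ∈ Finset.univ.filter (fun j : Fin (ℓ + 1) => (j : ℕ) ≤ i), h j := by
  have h0 : (0 : Fin (ℓ+1)) ∈ Finset.univ.filter (fun j : Fin (ℓ + 1) => (j : ℕ) ≤ i) := by
    simp
  calc 1 ≤ h 0 := (mem_Hset.1 hm).1 0 |>.1
  _ ≤ _ := Finset.single_le_sum (fun j _ => Nat.zero_le _) h0

lemma psum_lt {ℓ k : ℕ} {h : Fin (ℓ+1) → ℕ} (hm : h ∈ Hset ℓ k) {i : ℕ} (hi : i < ℓ) :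
    ∑ j ∈ Finset.univ.filter (fun j : Fin (ℓ + 1) => (j : ℕ) ≤ i), h j < k := by
  obtain ⟨h1, hs⟩ := mem_Hset.1 hm
  have hsub : Finset.univ.filter (fun j : Fin (ℓ + 1) => (j : ℕ) ≤ i)
      ⊆ Finset.univ.erase (Fin.last ℓ) := by
    intro j hj
    simp only [Finset.mem_filter] at hj
    apply Finset.mem_erase.2
    refine ⟨?_, Finset.mem_univ _⟩
    intro hje
    rw [hje] at hj
    simp only [Fin.val_last] at hj
    omega
  have h2 : ∑ j ∈ Finset.univ.filter (fun j : Fin (ℓ + 1) => (j : ℕ) ≤ i), h j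
      ≤ ∑ j ∈ Finset.univ.erase (Fin.last ℓ), h j :=
    Finset.sum_le_sum_of_subset hsub
  have h3 : h (Fin.last ℓ) + ∑ j ∈ Finset.univ.erase (Fin.last ℓ), h j = k := by
    rw [Finset.add_sum_erase _ _ (Finset.mem_univ _), hs]
  have := (h1 (Fin.last ℓ)).1
  omega

lemma Dset_lt {ℓ k : ℕ} {h : Fin (ℓ+1) → ℕ} (hm : h ∈ Hset ℓ k) :
    ∀ d ∈ Dset h, d + 1 < k := by
  intro d hd
  simp only [Dset, Finset.mem_image, Finset.mem_range] at hd
  obtain ⟨i, hi, rfl⟩ := hd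
  have := psum_pos hm i
  have := psum_lt hm hi
  omega

lemma two_le {ℓ k : ℕ} {h : Fin (ℓ+1) → ℕ} (hm : h ∈ Hset ℓ k) {i j : Fin (ℓ+1)}
    (hij : i ≠ j) : h i + h j ≤ k := by
  obtain ⟨h1, hs⟩ := mem_Hset.1 hm
  have hj : j ∈ Finset.univ.erase i := Finset.mem_erase.2 ⟨Ne.symm hij, Finset.mem_univ _⟩
  have h2 : h j ≤ ∑ x ∈ Finset.univ.erase i, h x :=
    Finset.single_le_sum (fun _ _ => Nat.zero_le _) hj
  have h3 : h i + ∑ x ∈ Finset.univ.erase i, h x = k := by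
    rw [Finset.add_sum_erase _ _ (Finset.mem_univ i), hs]
  omega

lemma psum_add_last {ℓ k : ℕ} {h : Fin (ℓ+1) → ℕ} (hm : h ∈ Hset ℓ k) {i : ℕ} (hi : i < ℓ) :
    (∑ j ∈ Finset.univ.filter (fun j : Fin (ℓ + 1) => (j : ℕ) ≤ i), h j) + h (Fin.last ℓ)
      ≤ k := by
  obtain ⟨h1, hs⟩ := mem_Hset.1 hm
  have hsub : Finset.univ.filter (fun j : Fin (ℓ + 1) => (j : ℕ) ≤ i)
      ⊆ Finset.univ.erase (Fin.last ℓ) := by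
    intro j hj
    simp only [Finset.mem_filter] at hj
    refine Finset.mem_erase.2 ⟨?_, Finset.mem_univ _⟩
    intro hje
    rw [hje] at hj
    simp only [Fin.val_last] at hj
    omega
  have h2 : ∑ j ∈ Finset.univ.filter (fun j : Fin (ℓ + 1) => (j : ℕ) ≤ i), h j
      ≤ ∑ j ∈ Finset.univ.erase (Fin.last ℓ), h j :=
    Finset.sum_le_sum_of_subset hsub
  have h3 : h (Fin.last ℓ) + ∑ j ∈ Finset.univ.erase (Fin.last ℓ), h j = k := by
    rw [Finset.add_sum_erase _ _ (Finset.mem_univ _), hs]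
  omega

lemma Dset_update_last {ℓ : ℕ} (h : Fin (ℓ+1) → ℕ) (v : ℕ) :
    Dset (Function.update h (Fin.last ℓ) v) = Dset h := by
  unfold Dset
  apply Finset.image_congr
  intro i hi
  simp only [Set.mem_setOf_eq, Finset.coe_range, Set.mem_Iio] at hi
  dsimp only
  congr 1
  apply Finset.sum_congr rfl
  intro j hj
  simp only [Finset.mem_filter] at hj
  apply Function.update_of_ne
  intro hje
  rw [hje] at hj
  simp only [Fin.val_last] at hj
  omega

lemma psum_snoc {ℓ : ℕ} (h : Fin (ℓ+1) → ℕ) (x : ℕ) {i : ℕ} (hi : i ≤ ℓ) :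
    ∑ j ∈ Finset.univ.filter (fun j : Fin (ℓ + 2) => (j : ℕ) ≤ i), (Fin.snoc h x) j
      = ∑ j ∈ Finset.univ.filter (fun j : Fin (ℓ + 1) => (j : ℕ) ≤ i), h j := by
  rw [Finset.sum_filter, Finset.sum_filter, Fin.sum_univ_castSucc]
  simp only [Fin.coe_castSucc, Fin.snoc_castSucc, Fin.val_last, Fin.snoc_last]
  rw [if_neg (by omega)]
  ring

lemma Dset_snoc {ℓ : ℕ} (h : Fin (ℓ+1) → ℕ) (x : ℕ) :
    Dset (Fin.snoc h x : Fin (ℓ+2) → ℕ) = insert ((∑ j, h j) - 1) (Dset h) := by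
  unfold Dset
  rw [Finset.range_add_one, Finset.image_insert]
  congr 1
  · rw [psum_snoc h x (le_refl ℓ)]
    have hf : Finset.univ.filter (fun j : Fin (ℓ + 1) => (j : ℕ) ≤ ℓ) = Finset.univ :=
      Finset.filter_true_of_mem (fun j _ => Nat.lt_succ_iff.1 j.isLt)
    rw [hf]
  · apply Finset.image_congr
    intro i hi
    simp only [Set.mem_setOf_eq, Finset.coe_range, Set.mem_Iio] at hi
    dsimp only
    rw [psum_snoc h x (le_of_lt hi)]

lemma kappa_update {ℓ m : ℕ} {h : Fin (ℓ+1) → ℕ} (hm : h ∈ Hset ℓ (m+2))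
    (hl : 2 ≤ h (Fin.last ℓ)) (T : ℤ) :
    kappa T (m+2) h = (T - (m : ℤ)) *
      kappa T (m+1) (Function.update h (Fin.last ℓ) (h (Fin.last ℓ) - 1)) := by
  rw [kappa_eq, kappa_eq, Dset_update_last]
  have hnot : m ∉ Dset h := by
    intro hmem
    simp only [Dset, Finset.mem_image, Finset.mem_range] at hmem
    obtain ⟨i, hi, hieq⟩ := hmem
    have h1 := psum_add_last hm hi
    have h2 := psum_pos hm i
    omega
  show ∏ x ∈ Finset.range (m + 1) \ Dset h, (T - (x:ℤ))
    = (T - (m:ℤ)) * ∏ x ∈ Finset.range m \ Dset h, (T - (x:ℤ))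
  rw [Finset.range_add_one, Finset.insert_sdiff_of_notMem _ hnot,
    Finset.prod_insert (by simp)]

lemma kappa_snoc {ℓ m : ℕ} (h : Fin (ℓ+1) → ℕ) (hm : h ∈ Hset ℓ (m+1)) (T : ℤ) :
    kappa T (m+2) (Fin.snoc h 1 : Fin (ℓ+2) → ℕ) = kappa T (m+1) h := by
  rw [kappa_eq, kappa_eq, Dset_snoc]
  have hs : (∑ j, h j) - 1 = m := by rw [(mem_Hset.1 hm).2]; omega
  rw [hs]
  congr 1
  ext x
  simp only [Finset.mem_sdiff, Finset.mem_insert, Finset.mem_range]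
  constructor
  · rintro ⟨h1, h2⟩
    push_neg at h2
    exact ⟨by omega, h2.2⟩
  · rintro ⟨h1, h2⟩
    refine ⟨by omega, ?_⟩
    push_neg
    exact ⟨by omega, h2⟩

lemma partA (ℓ m : ℕ) (T : ℤ) :
    ∑ h ∈ (Hset ℓ (m+2)).filter (fun h => h (Fin.last ℓ) ≠ 1), kappa T (m+2) h
      = (T - (m : ℤ)) * ∑ h ∈ Hset ℓ (m+1), kappa T (m+1) h := by
  rw [Finset.mul_sum]
  refine Finset.sum_nbij'
    (fun h => Function.update h (Fin.last ℓ) (h (Fin.last ℓ) - 1))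
    (fun h => Function.update h (Fin.last ℓ) (h (Fin.last ℓ) + 1)) ?_ ?_ ?_ ?_ ?_
  · intro h hh
    rw [Finset.mem_filter] at hh
    obtain ⟨hh, hl⟩ := hh
    obtain ⟨h1, hs⟩ := mem_Hset.1 hh
    have hl2 : 2 ≤ h (Fin.last ℓ) := by have := (h1 (Fin.last ℓ)).1; omega
    rw [mem_Hset]
    constructor
    · intro i
      rcases eq_or_ne i (Fin.last ℓ) with rfl | hne
      · rw [Function.update_self]
        have := (h1 (Fin.last ℓ)).2
        omega
      · rw [Function.update_of_ne hne]
        have := (h1 i).1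
        have := two_le hh hne
        omega
    · rw [Finset.sum_update_of_mem (Finset.mem_univ _)]
      have he : ∑ x ∈ Finset.univ \ {Fin.last ℓ}, h x = (m + 2) - h (Fin.last ℓ) := by
        rw [Finset.sdiff_singleton_eq_erase]
        have := Finset.add_sum_erase Finset.univ h (Finset.mem_univ (Fin.last ℓ))
        omega
      rw [he]
      have := (h1 (Fin.last ℓ)).2
      omega
  · intro h hh
    obtain ⟨h1, hs⟩ := mem_Hset.1 hh
    rw [Finset.mem_filter]
    constructor
    · rw [mem_Hset]
      constructor
      · intro i
        rcases eq_or_ne i (Fin.last ℓ) with rfl | hne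
        · rw [Function.update_self]
          have h1l := (h1 (Fin.last ℓ))
          omega
        · rw [Function.update_of_ne hne]
          have := (h1 i)
          omega
      · rw [Finset.sum_update_of_mem (Finset.mem_univ _)]
        have he : ∑ x ∈ Finset.univ \ {Fin.last ℓ}, h x = (m + 1) - h (Fin.last ℓ) := by
          rw [Finset.sdiff_singleton_eq_erase]
          have := Finset.add_sum_erase Finset.univ h (Finset.mem_univ (Fin.last ℓ))
          omega
        rw [he]
        have h1l2 := (h1 (Fin.last ℓ)).2
        omega
    · rw [Function.update_self]
      have := (h1 (Fin.last ℓ)).1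
      omega
  · intro h hh
    rw [Finset.mem_filter] at hh
    obtain ⟨hh, hl⟩ := hh
    have hl1 : 1 ≤ h (Fin.last ℓ) := ((mem_Hset.1 hh).1 (Fin.last ℓ)).1
    funext i
    rcases eq_or_ne i (Fin.last ℓ) with rfl | hne
    · rw [Function.update_self, Function.update_self]
      omega
    · rw [Function.update_of_ne hne, Function.update_of_ne hne]
  · intro h hh
    funext i
    rcases eq_or_ne i (Fin.last ℓ) with rfl | hne
    · rw [Function.update_self, Function.update_self]
      omega
    · rw [Function.update_of_ne hne, Function.update_of_ne hne]
  · intro h hh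
    rw [Finset.mem_filter] at hh
    obtain ⟨hh, hl⟩ := hh
    have hl2 : 2 ≤ h (Fin.last ℓ) := by
      have := ((mem_Hset.1 hh).1 (Fin.last ℓ)).1; omega
    exact kappa_update hh hl2 T

lemma comp_mem {ℓ m : ℕ} {h : Fin (ℓ+2) → ℕ} (hh : h ∈ Hset (ℓ+1) (m+2))
    (hl : h (Fin.last (ℓ+1)) = 1) : (h ∘ Fin.castSucc) ∈ Hset ℓ (m+1) := by
  obtain ⟨h1, hs⟩ := mem_Hset.1 hh
  rw [mem_Hset]
  constructor
  · intro i
    have hne : (Fin.castSucc i) ≠ Fin.last (ℓ+1) := (Fin.castSucc_lt_last i).ne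
    have := two_le hh hne
    have := (h1 (Fin.castSucc i)).1
    simp only [Function.comp_apply]
    omega
  · rw [Fin.sum_univ_castSucc (f := h)] at hs
    rw [hl] at hs
    simp only [Function.comp_apply]
    omega

lemma partB (ℓ m : ℕ) (T : ℤ) :
    ∑ h ∈ (Hset (ℓ+1) (m+2)).filter (fun h => h (Fin.last (ℓ+1)) = 1), kappa T (m+2) h
      = ∑ h ∈ Hset ℓ (m+1), kappa T (m+1) h := by
  refine Finset.sum_nbij' (fun h => h ∘ Fin.castSucc)
    (fun h => (Fin.snoc h 1 : Fin (ℓ+2) → ℕ)) ?_ ?_ ?_ ?_ ?_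
  · intro h hh
    rw [Finset.mem_filter] at hh
    exact comp_mem hh.1 hh.2
  · intro h hh
    obtain ⟨h1, hs⟩ := mem_Hset.1 hh
    rw [Finset.mem_filter]
    refine ⟨?_, by simp⟩
    rw [mem_Hset]
    constructor
    · intro i
      refine Fin.lastCases ?_ ?_ i
      · rw [Fin.snoc_last]
        omega
      · intro j
        rw [Fin.snoc_castSucc]
        have := h1 j
        omega
    · rw [Fin.sum_univ_castSucc]
      simp only [Fin.snoc_castSucc, Fin.snoc_last]
      omega
  · intro h hh
    rw [Finset.mem_filter] at hh
    obtain ⟨hh, hl⟩ := hh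
    funext i
    refine Fin.lastCases ?_ ?_ i
    · rw [Fin.snoc_last, hl]
    · intro j
      rw [Fin.snoc_castSucc]
      rfl
  · intro h hh
    funext i
    simp [Fin.snoc_castSucc]
  · intro h hh
    rw [Finset.mem_filter] at hh
    obtain ⟨hh, hl⟩ := hh
    have hmem : (h ∘ Fin.castSucc) ∈ Hset ℓ (m+1) := comp_mem hh hl
    have heq : h = (Fin.snoc (h ∘ Fin.castSucc) 1 : Fin (ℓ+2) → ℕ) := by
      funext i
      refine Fin.lastCases ?_ ?_ i
      · rw [Fin.snoc_last, hl]
      · intro j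
        rw [Fin.snoc_castSucc]
        rfl
    calc kappa T (m+2) h = kappa T (m+2) (Fin.snoc (h ∘ Fin.castSucc) 1 : Fin (ℓ+2) → ℕ) := by
          rw [← heq]
    _ = kappa T (m+1) (h ∘ Fin.castSucc) := kappa_snoc _ hmem T

lemma partB0 (m : ℕ) :
    (Hset 0 (m+2)).filter (fun h => h (Fin.last 0) = 1) = ∅ := by
  ext h
  simp only [Finset.mem_filter, Finset.notMem_empty, iff_false, not_and]
  intro hh hl
  obtain ⟨h1, hs⟩ := mem_Hset.1 hh
  rw [Fin.sum_univ_one] at hs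
  have h0 : Fin.last 0 = 0 := rfl
  rw [h0] at hl
  omega

noncomputable def Sr (ℓ k : ℕ) (j : ℕ) : ℝ := ∑ h ∈ Hset ℓ k, (kappa (j : ℤ) k h : ℝ)

lemma Sr_zero_one (j : ℕ) : Sr 0 1 j = 1 := by
  unfold Sr
  rw [Hset_zero (le_refl 1), Finset.sum_singleton]
  simp [kappa]

lemma Sr_succ_one (ℓ j : ℕ) : Sr (ℓ+1) 1 j = 0 := by
  unfold Sr
  rw [Hset_eq_empty (by omega), Finset.sum_empty]

lemma Sr_empty {ℓ k : ℕ} (h : k ≤ ℓ) (j : ℕ) : Sr ℓ k j = 0 := by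
  unfold Sr
  rw [Hset_eq_empty h, Finset.sum_empty]

lemma Sr_rec_zero (m j : ℕ) : Sr 0 (m+2) j = ((j : ℝ) - m) * Sr 0 (m+1) j := by
  have hz : ∑ h ∈ Hset 0 (m+2), kappa (j:ℤ) (m+2) h
      = ((j:ℤ) - m) * ∑ h ∈ Hset 0 (m+1), kappa (j:ℤ) (m+1) h := by
    rw [← Finset.sum_filter_add_sum_filter_not (Hset 0 (m+2))
      (fun h => h (Fin.last 0) = 1), partB0, Finset.sum_empty, zero_add]
    exact partA 0 m (j:ℤ)
  unfold Sr
  have := congrArg (fun z : ℤ => (z : ℝ)) hz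
  push_cast at this ⊢
  convert this using 2

lemma Sr_rec_succ (ℓ m j : ℕ) :
    Sr (ℓ+1) (m+2) j = ((j : ℝ) - m) * Sr (ℓ+1) (m+1) j + Sr ℓ (m+1) j := by
  have hz : ∑ h ∈ Hset (ℓ+1) (m+2), kappa (j:ℤ) (m+2) h
      = ((j:ℤ) - m) * (∑ h ∈ Hset (ℓ+1) (m+1), kappa (j:ℤ) (m+1) h)
        + ∑ h ∈ Hset ℓ (m+1), kappa (j:ℤ) (m+1) h := by
    rw [← Finset.sum_filter_add_sum_filter_not (Hset (ℓ+1) (m+2))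
      (fun h => h (Fin.last (ℓ+1)) = 1), partB, partA, add_comm]
  unfold Sr
  have := congrArg (fun z : ℤ => (z : ℝ)) hz
  push_cast at this ⊢
  convert this using 2

lemma coeff_rec (a : ℕ) (c : ℕ → ℕ → ℝ) (m j i : ℕ) :
    ∑ I ∈ Finset.Icc i a, c I j * (-1 : ℝ)^(I-i) * Sr (I-i) (m+2) j
      = ((j:ℝ) - m) * (∑ I ∈ Finset.Icc i a, c I j * (-1 : ℝ)^(I-i) * Sr (I-i) (m+1) j)
        - ∑ I ∈ Finset.Icc (i+1) a, c I j * (-1 : ℝ)^(I-(i+1)) * Sr (I-(i+1)) (m+1) j := by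
  rcases le_or_gt i a with hia | hia
  · have hnot : i ∉ Finset.Icc (i+1) a := by simp
    have hIcc : Finset.Icc i a = insert i (Finset.Icc (i+1) a) := by
      ext x
      simp only [Finset.mem_Icc, Finset.mem_insert]
      omega
    have key : ∀ I ∈ Finset.Icc (i+1) a,
        c I j * (-1 : ℝ)^(I-i) * Sr (I-i) (m+2) j
          = ((j:ℝ) - m) * (c I j * (-1 : ℝ)^(I-i) * Sr (I-i) (m+1) j)
            - c I j * (-1 : ℝ)^(I-(i+1)) * Sr (I-(i+1)) (m+1) j := by
      intro I hI
      simp only [Finset.mem_Icc] at hI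
      have h1 : I - i = (I - (i+1)) + 1 := by omega
      rw [h1, Sr_rec_succ, pow_succ]
      ring
    rw [hIcc, Finset.sum_insert hnot, Finset.sum_insert hnot,
      Finset.sum_congr rfl key, Finset.sum_sub_distrib, ← Finset.mul_sum,
      Nat.sub_self, Sr_rec_zero]
    ring
  · rw [Finset.Icc_eq_empty (by omega), Finset.Icc_eq_empty (by omega),
      Finset.sum_empty, Finset.sum_empty, Finset.sum_empty]
    ring

lemma X_mul_derivative (b : ℝ) (j : ℕ) :
    Polynomial.X * Polynomial.derivative (Polynomial.C b * Polynomial.X ^ j)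
      = Polynomial.C ((j : ℝ) * b) * Polynomial.X ^ j := by
  rw [Polynomial.derivative_C_mul_X_pow]
  cases j with
  | zero => simp
  | succ s =>
    rw [Nat.add_sub_cancel]
    rw [← mul_assoc, mul_comm Polynomial.X _, mul_assoc, ← pow_succ']
    congr 1
    rw [mul_comm]

lemma mainA (a n : ℕ) (c : ℕ → ℕ → ℝ) (k : ℕ) (hk : 1 ≤ k) :
    ∀ i, 1 ≤ i →
    famA (fun i' => if 1 ≤ i' ∧ i' ≤ a then
        ∑ j ∈ Finset.range (n + 1), Polynomial.C (c i' j) * Polynomial.X ^ j else 0) k i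
      = ∑ j ∈ Finset.range (n + 1), Polynomial.C
          (∑ I ∈ Finset.Icc i a, c I j * (-1 : ℝ) ^ (I - i) * Sr (I - i) k j)
          * Polynomial.X ^ j := by
  induction k, hk using Nat.le_induction with
  | base =>
    intro i hi1
    rw [show famA (fun i' => if 1 ≤ i' ∧ i' ≤ a then
        ∑ j ∈ Finset.range (n + 1), Polynomial.C (c i' j) * Polynomial.X ^ j else 0) 1 i
      = (if 1 ≤ i ∧ i ≤ a then
        ∑ j ∈ Finset.range (n + 1), Polynomial.C (c i j) * Polynomial.X ^ j else 0) from rfl]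
    rcases le_or_gt i a with hia | hia
    · rw [if_pos ⟨hi1, hia⟩]
      apply Finset.sum_congr rfl
      intro j _
      congr 1
      rw [Finset.sum_eq_single i]
      · rw [Nat.sub_self, pow_zero, Sr_zero_one]
        ring
      · intro I hI hne
        simp only [Finset.mem_Icc] at hI
        have hd : I - i = (I - i - 1) + 1 := by omega
        rw [hd, Sr_succ_one]
        ring
      · intro habs
        exact absurd (Finset.mem_Icc.2 ⟨le_refl i, hia⟩) habs
    · rw [if_neg (by omega)]
      symm
      apply Finset.sum_eq_zero
      intro j _
      rw [Finset.Icc_eq_empty (by omega), Finset.sum_empty, map_zero, zero_mul]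
  | succ q hq IH =>
    obtain ⟨p, rfl⟩ : ∃ p, q = p + 1 := ⟨q - 1, by omega⟩
    intro i hi1
    rw [show famA (fun i' => if 1 ≤ i' ∧ i' ≤ a then
        ∑ j ∈ Finset.range (n + 1), Polynomial.C (c i' j) * Polynomial.X ^ j else 0) (p+2) i
      = -(Polynomial.C ((p : ℕ) : ℝ) * famA (fun i' => if 1 ≤ i' ∧ i' ≤ a then
          ∑ j ∈ Finset.range (n + 1), Polynomial.C (c i' j) * Polynomial.X ^ j else 0) (p+1) i)
        + Polynomial.X * (famA (fun i' => if 1 ≤ i' ∧ i' ≤ a then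
          ∑ j ∈ Finset.range (n + 1), Polynomial.C (c i' j) * Polynomial.X ^ j else 0)
            (p+1) i).derivative
        - famA (fun i' => if 1 ≤ i' ∧ i' ≤ a then
          ∑ j ∈ Finset.range (n + 1), Polynomial.C (c i' j) * Polynomial.X ^ j else 0)
            (p+1) (i+1) from rfl]
    rw [IH i hi1, IH (i+1) (by omega)]
    rw [Polynomial.derivative_sum, Finset.mul_sum, Finset.mul_sum,
      ← Finset.sum_neg_distrib, ← Finset.sum_add_distrib, ← Finset.sum_sub_distrib]
    apply Finset.sum_congr rfl
    intro j _
    rw [X_mul_derivative, coeff_rec a c p j i]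
    simp only [map_sub, map_mul]
    ring

/-- Eq. (eqch3) of the paper: the explicit formula for `P_{k,i}`, stated for the
polynomial `z^{k-1} P_{k,i}(z)`: its coefficient of `z^j` (`0 ≤ j ≤ n`, i.e.
`j = t+k-1` with `1-k ≤ t ≤ n+1-k`) equals
`∑_{I=i}^{min(a,i+k-1)} c_{I,j} (-1)^{I-i} ∑_{h ∈ H_{I-i,k}} κ(j,k,h)`. -/
theorem stmt11 (a n : ℕ) (ha : 1 ≤ a) (c : ℕ → ℕ → ℝ) (k : ℕ) (hk : 1 ≤ k)
    (i : ℕ) (hi1 : 1 ≤ i) (hia : i ≤ a) :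
    famA (fun i' => if 1 ≤ i' ∧ i' ≤ a then
        ∑ j ∈ Finset.range (n + 1), Polynomial.C (c i' j) * Polynomial.X ^ j else 0) k i
      = ∑ j ∈ Finset.range (n + 1), Polynomial.C
          (∑ I ∈ Finset.Icc i (min a (i + k - 1)),
            c I j * (-1 : ℝ) ^ (I - i) * ∑ h ∈ Hset (I - i) k, (kappa (j : ℤ) k h : ℝ))
          * Polynomial.X ^ j := by
  rw [mainA a n c k hk i hi1]
  apply Finset.sum_congr rfl
  intro j _
  congr 1
  rw [← Finset.sum_subset (Finset.Icc_subset_Icc_right (min_le_left a (i + k - 1)))]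
  · rfl
  · intro I hI hnot
    simp only [Finset.mem_Icc] at hI hnot
    have hke : k ≤ I - i := by omega
    rw [Sr_empty hke]
    ring
end

section
/- Let a ≥ 1, n ≥ 0, k ≥ 1 be integers, let T be an integer with 0 ≤ T ≤ n, let ℓ be an integer with 0 ≤ ℓ ≤ min(a−1, k−1), and let h ∈ H_{ℓ,k}. Then (d_k · Δ_{a, max(k,n)} / (k−1)!) · κ(T, k, h) is an integer. -/
open Nat Finset

lemma prod_range_sub_eq_factorial (r : ℕ) : ∏ m ∈ Finset.range r, (r - m) = r ! := by
  induction r with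
  | zero => simp
  | succ n ih =>
    rw [Finset.prod_range_succ']
    have : ∀ i ∈ Finset.range n, (n + 1 - (i + 1)) = n - i := fun i hi => by omega
    rw [Finset.prod_congr rfl this, ih]
    simp [Nat.factorial_succ, Nat.mul_comm]

lemma prod_Ico_sub_eq_factorial (s t : ℕ) (hst : s ≤ t) :
    ∏ m ∈ Finset.Ico (s+1) t, (m - s) = (t - s - 1)! := by
  rw [Finset.prod_Ico_eq_prod_range]
  rcases Nat.eq_or_lt_of_le hst with rfl | hlt
  · simp
  have : ∀ i ∈ Finset.range (t - (s+1)), (s + 1 + i - s) = i + 1 := fun i hi => by omega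
  rw [Finset.prod_congr rfl this, Finset.prod_range_add_one_eq_factorial]
  congr 1

lemma natAbs_finset_prod {α : Type*} (s : Finset α) (f : α → ℤ) :
    (∏ i ∈ s, f i).natAbs = ∏ i ∈ s, (f i).natAbs := by
  classical
  induction s using Finset.induction with
  | empty => simp
  | insert x s hx ih => simp [Finset.prod_insert hx, Int.natAbs_mul, ih]

lemma factorial_dvd_prod_range (r : ℕ) (T : ℤ) (hT : 0 ≤ T) :
    (r ! : ℤ) ∣ ∏ m ∈ Finset.range r, (T - (m : ℤ)) := by
  obtain ⟨t, rfl⟩ := Int.eq_ofNat_of_zero_le hT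
  rcases lt_or_ge t r with hlt | hle
  · rw [Finset.prod_eq_zero (Finset.mem_range.mpr hlt) (by simp)]
    exact dvd_zero _
  · have hcast : ∏ m ∈ Finset.range r, ((t : ℤ) - (m : ℤ)) = ((t.descFactorial r : ℕ) : ℤ) := by
      rw [Nat.descFactorial_eq_prod_range, Nat.cast_prod]
      refine Finset.prod_congr rfl fun m hm => ?_
      have : m ≤ t := le_trans (Nat.le_of_lt (Finset.mem_range.mp hm)) hle
      push_cast [Nat.cast_sub this]
      ring
    rw [hcast]
    exact_mod_cast Nat.factorial_dvd_descFactorial t r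

lemma div_add_one_le (b c q : ℕ) (hq : 0 < q) : (b + c + 1) / q ≤ b / q + c / q + 1 := by
  rw [Nat.div_le_iff_le_mul_add_pred hq]
  have hb := Nat.div_add_mod b q
  have hc := Nat.div_add_mod c q
  have hb' : b % q < q := Nat.mod_lt _ hq
  have hc' : c % q < q := Nat.mod_lt _ hq
  have : q * (b / q + c / q + 1) = q * (b / q) + q * (c / q) + q := by ring
  omega

lemma factorization_factorial_legendre {p : ℕ} (hp : p.Prime) (n B : ℕ) (hB : Nat.log p n < B) :
    (n !).factorization p = ∑ i ∈ Finset.Ico 1 B, n / p ^ i := by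
  have h0 : n ! ≠ 0 := Nat.factorial_ne_zero n
  apply le_antisymm
  · exact (Nat.Prime.pow_dvd_factorial_iff hp hB).mp (Nat.ordProj_dvd (n !) p)
  · exact (Nat.Prime.pow_dvd_iff_le_factorization hp h0).mp
      ((Nat.Prime.pow_dvd_factorial_iff hp hB).mpr le_rfl)

lemma lemA (b c : ℕ) :
    (b + c + 1)! ∣ (Finset.Icc 1 (b + c + 1)).lcm id * (b ! * c !) := by
  set n := b + c + 1 with hn
  set d := (Finset.Icc 1 n).lcm id with hd
  have hn0 : n ≠ 0 := by omega
  have hd0 : d ≠ 0 := by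
    rw [hd, Ne, Finset.lcm_eq_zero_iff]
    simp only [Set.mem_image, id_eq, Finset.mem_coe, Finset.mem_Icc]
    rintro ⟨x, ⟨hx1, _⟩, rfl⟩
    omega
  have hrhs0 : d * (b ! * c !) ≠ 0 :=
    mul_ne_zero hd0 (mul_ne_zero (Nat.factorial_ne_zero b) (Nat.factorial_ne_zero c))
  rw [← Nat.factorization_le_iff_dvd (Nat.factorial_ne_zero n) hrhs0]
  intro p
  by_cases hp : p.Prime
  swap
  · simp [Nat.factorization_eq_zero_of_not_prime _ hp]
  have hp1 : 1 < p := hp.one_lt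
  set L := Nat.log p n with hL
  set B := L + 1 with hB
  have hlogb : Nat.log p b < B := by
    have := Nat.log_mono_right (b := p) (show b ≤ n by omega); omega
  have hlogc : Nat.log p c < B := by
    have := Nat.log_mono_right (b := p) (show c ≤ n by omega); omega
  have hlogn : Nat.log p n < B := by omega
  rw [Nat.factorization_mul hd0 (mul_ne_zero (Nat.factorial_ne_zero b) (Nat.factorial_ne_zero c)),
    Nat.factorization_mul (Nat.factorial_ne_zero b) (Nat.factorial_ne_zero c)]
  simp only [Finsupp.coe_add, Pi.add_apply]
  have hdL : L ≤ d.factorization p := by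
    have hmem : p ^ L ∈ Finset.Icc 1 n :=
      Finset.mem_Icc.mpr ⟨Nat.one_le_iff_ne_zero.mpr (pow_ne_zero _ (by omega)),
        Nat.pow_log_le_self p hn0⟩
    have : (p ^ L : ℕ) ∣ d := by
      have := Finset.dvd_lcm (f := (id : ℕ → ℕ)) hmem
      simpa using this
    exact (Nat.Prime.pow_dvd_iff_le_factorization hp hd0).mp this
  rw [factorization_factorial_legendre hp n B hlogn,
    factorization_factorial_legendre hp b B hlogb,
    factorization_factorial_legendre hp c B hlogc]
  have key : ∑ i ∈ Finset.Ico 1 B, n / p ^ i ≤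
      L + (∑ i ∈ Finset.Ico 1 B, b / p ^ i + ∑ i ∈ Finset.Ico 1 B, c / p ^ i) := by
    have step : ∀ i ∈ Finset.Ico 1 B, n / p ^ i ≤
        b / p ^ i + c / p ^ i + (if p ^ i ≤ n then 1 else 0) := by
      intro i _
      by_cases hle : p ^ i ≤ n
      · rw [if_pos hle, hn]
        exact div_add_one_le b c (p ^ i) (pow_pos (by omega) i)
      · rw [if_neg hle, Nat.div_eq_of_lt (by omega)]
        simp
    calc ∑ i ∈ Finset.Ico 1 B, n / p ^ i
        ≤ ∑ i ∈ Finset.Ico 1 B, (b / p ^ i + c / p ^ i + (if p ^ i ≤ n then 1 else 0)) :=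
          Finset.sum_le_sum step
      _ = ∑ i ∈ Finset.Ico 1 B, b / p ^ i + ∑ i ∈ Finset.Ico 1 B, c / p ^ i +
            ∑ i ∈ Finset.Ico 1 B, (if p ^ i ≤ n then 1 else 0) := by
          rw [Finset.sum_add_distrib, Finset.sum_add_distrib]
      _ ≤ _ := by
          have : ∑ i ∈ Finset.Ico 1 B, (if p ^ i ≤ n then 1 else 0) = L := by
            rw [Finset.sum_boole]
            have hfil : (Finset.Ico 1 B).filter (fun i => p ^ i ≤ n) = Finset.Icc 1 L := by
              ext i
              simp only [Finset.mem_filter, Finset.mem_Ico, Finset.mem_Icc]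
              constructor
              · rintro ⟨⟨h1, h2⟩, h3⟩
                exact ⟨h1, (Nat.le_log_iff_pow_le hp1 hn0).mpr h3⟩
              · rintro ⟨h1, h2⟩
                exact ⟨⟨h1, by omega⟩, (Nat.le_log_iff_pow_le hp1 hn0).mp h2⟩
            rw [hfil]
            simp [Nat.card_Icc]
          omega
  omega

lemma lemB (a n k : ℕ) (T : ℤ) (hT0 : 0 ≤ T) (hTn : T ≤ (n : ℤ)) (M : Finset ℕ)
    (hMk : ∀ m ∈ M, m < k) (hMa : M.card ≤ a) (hM0 : ∀ m ∈ M, T ≠ (m : ℤ)) :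
    (∏ m ∈ M, (T - (m : ℤ))).natAbs ∣ Delta a (max k n) := by
  rcases M.eq_empty_or_nonempty with rfl | hne
  · simp
  set N := max k n with hN
  have hkN : (k : ℤ) ≤ (N : ℤ) := by exact_mod_cast Nat.le_max_left k n
  have hnN : (n : ℤ) ≤ (N : ℤ) := by exact_mod_cast Nat.le_max_right k n
  set s : Finset ℤ := M.image (fun m : ℕ => T - (m : ℤ)) with hs
  have hinj : Set.InjOn (fun m : ℕ => T - (m : ℤ)) M := by
    intro x _ y _ hxy
    simp only at hxy
    omega
  have hprod : s.prod id = ∏ m ∈ M, (T - (m : ℤ)) := by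
    rw [hs, Finset.prod_image ?_]
    · rfl
    · exact fun x hx y hy => hinj hx hy
  have hmem : s ∈ (Finset.Icc (-(N : ℤ)) (N : ℤ)).powerset.filter (fun s =>
      s.Nonempty ∧ s.card ≤ a ∧ (0 : ℤ) ∉ s ∧ ∀ x ∈ s, ∀ y ∈ s, x - y ≤ (N : ℤ)) := by
    rw [Finset.mem_filter, Finset.mem_powerset]
    refine ⟨?_, ?_, ?_, ?_, ?_⟩
    · intro x hx
      rw [hs] at hx
      obtain ⟨m, hmM, rfl⟩ := Finset.mem_image.mp hx
      have h1 : (m : ℤ) < k := by exact_mod_cast hMk m hmM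
      rw [Finset.mem_Icc]
      omega
    · exact hne.image _
    · exact le_trans Finset.card_image_le hMa
    · intro h0
      obtain ⟨m, hmM, hm⟩ := Finset.mem_image.mp h0
      exact hM0 m hmM (by omega)
    · intro x hx y hy
      obtain ⟨mx, hmx, rfl⟩ := Finset.mem_image.mp hx
      obtain ⟨my, hmy, rfl⟩ := Finset.mem_image.mp hy
      have h1 : (my : ℤ) < k := by exact_mod_cast hMk my hmy
      have h2 : (0:ℤ) ≤ mx := by positivity
      omega
  have := Finset.dvd_lcm (f := fun s : Finset ℤ => (s.prod id).natAbs) hmem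
  simp only [Delta]
  rw [← hprod]
  exact this


/-- Eq. (eqch11) of the paper: `(d_k Δ_{a,max(k,n)} / (k-1)!) κ(T,k,h)` is an
integer, i.e. `(k-1)!` divides `d_k Δ_{a,max(k,n)} κ(T,k,h)`, where
`d_k = lcm(1, …, k)`. -/
theorem stmt13 (a n k : ℕ) (ha : 1 ≤ a) (hk : 1 ≤ k) (T : ℤ) (hT0 : 0 ≤ T) (hTn : T ≤ (n : ℤ))
    (ℓ : ℕ) (hℓa : ℓ ≤ a - 1) (hℓk : ℓ ≤ k - 1) (h : Fin (ℓ + 1) → ℕ) (hh : h ∈ Hset ℓ k) :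
    (Nat.factorial (k - 1) : ℤ) ∣
      (((Finset.Icc 1 k).lcm id : ℕ) : ℤ) * (Delta a (max k n) : ℤ) * kappa T k h := by
  classical
  have hh' := hh
  simp only [Hset, Finset.mem_filter, Fintype.mem_piFinset, Finset.mem_Icc] at hh'
  obtain ⟨hh1, hhsum⟩ := hh'
  set K := k - 1 with hK
  set S : Finset ℕ := (Finset.range ℓ).image (fun i =>
      (∑ j ∈ Finset.univ.filter (fun j : Fin (ℓ + 1) => (j : ℕ) ≤ i), h j) - 1) with hSdef
  have hκ : kappa T k h = ∏ m ∈ Finset.range K \ S, (T - (m : ℤ)) := rfl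
  have hSsub : S ⊆ Finset.range K := by
    intro m hm
    rw [hSdef, Finset.mem_image] at hm
    obtain ⟨i, hi, rfl⟩ := hm
    rw [Finset.mem_range] at hi
    have hlast : (Fin.last ℓ) ∉ Finset.univ.filter (fun j : Fin (ℓ+1) => (j:ℕ) ≤ i) := by
      simp [Fin.last]
      omega
    have hsum : (∑ j ∈ Finset.univ.filter (fun j : Fin (ℓ+1) => (j:ℕ) ≤ i), h j)
        + h (Fin.last ℓ) ≤ k := by
      rw [← hhsum, add_comm, ← Finset.sum_insert hlast]
      exact Finset.sum_le_sum_of_subset (Finset.subset_univ _)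
    have h1 := (hh1 (Fin.last ℓ)).1
    rw [Finset.mem_range]
    omega
  have hScard : S.card ≤ ℓ := le_trans Finset.card_image_le (by simp)
  have hdvdΔ : ∀ M : Finset ℕ, M ⊆ S →
      (∀ m ∈ M, T ≠ (m : ℤ)) → (∏ m ∈ M, (T - (m : ℤ))) ∣ (Delta a (max k n) : ℤ) := by
    intro M hMS hM0
    have hMk : ∀ m ∈ M, m < k := fun m hm => by
      have := Finset.mem_range.mp (hSsub (hMS hm)); omega
    have hMa : M.card ≤ a :=
      le_trans (Finset.card_le_card hMS) (le_trans hScard (by omega))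
    have h2 := lemB a n k T hT0 hTn M hMk hMa hM0
    exact dvd_trans (Int.dvd_natAbs.mpr dvd_rfl) (Int.natCast_dvd_natCast.mpr h2)
  by_cases hTS : ∃ m ∈ S, T = (m : ℤ)
  · -- T coincides with an omitted factor
    obtain ⟨m₀, hm₀S, hTm₀⟩ := hTS
    have hm₀K : m₀ < K := Finset.mem_range.mp (hSsub hm₀S)
    set c := K - m₀ - 1 with hc
    have hsetEq : Finset.range K \ S = ((Finset.range K).erase m₀) \ (S.erase m₀) := by
      ext m
      simp only [Finset.mem_sdiff, Finset.mem_erase, Finset.mem_range]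
      constructor
      · rintro ⟨h1, h2⟩
        exact ⟨⟨fun he => h2 (he ▸ hm₀S), h1⟩, fun hcon => h2 hcon.2⟩
      · rintro ⟨⟨hne, h1⟩, h2⟩
        exact ⟨h1, fun hm => h2 ⟨hne, hm⟩⟩
    have hsub' : S.erase m₀ ⊆ (Finset.range K).erase m₀ :=
      Finset.erase_subset_erase _ hSsub
    have key : kappa T k h * (∏ m ∈ S.erase m₀, (T - (m : ℤ)))
        = ∏ m ∈ (Finset.range K).erase m₀, (T - (m : ℤ)) := by
      rw [hκ, hsetEq]
      exact Finset.prod_sdiff hsub'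
    have hsplit : (Finset.range K).erase m₀ = Finset.range m₀ ∪ Finset.Ico (m₀+1) K := by
      ext m
      simp only [Finset.mem_erase, Finset.mem_range, Finset.mem_union, Finset.mem_Ico]
      omega
    have hdisj : Disjoint (Finset.range m₀) (Finset.Ico (m₀+1) K) := by
      rw [Finset.disjoint_left]
      intro x hx hx'
      rw [Finset.mem_range] at hx
      rw [Finset.mem_Ico] at hx'
      omega
    have hPabs : (∏ m ∈ (Finset.range K).erase m₀, (T - (m : ℤ))).natAbs = m₀ ! * c ! := by
      rw [natAbs_finset_prod, hsplit, Finset.prod_union hdisj]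
      congr 1
      · rw [← prod_range_sub_eq_factorial m₀]
        refine Finset.prod_congr rfl fun m hm => ?_
        rw [Finset.mem_range] at hm
        omega
      · rw [hc, ← prod_Ico_sub_eq_factorial m₀ K hm₀K.le]
        refine Finset.prod_congr rfl fun m hm => ?_
        rw [Finset.mem_Ico] at hm
        omega
    have hA : K ! ∣ (Finset.Icc 1 K).lcm id * (m₀ ! * c !) := by
      have := lemA m₀ c
      have hKeq : m₀ + c + 1 = K := by omega
      rwa [hKeq] at this
    have hdKk : (Finset.Icc 1 K).lcm id ∣ (Finset.Icc 1 k).lcm id := by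
      apply Finset.lcm_dvd
      intro b hb
      have : b ∈ Finset.Icc 1 k := by
        rw [Finset.mem_Icc] at hb ⊢
        omega
      exact Finset.dvd_lcm this
    have hD'' : (∏ m ∈ S.erase m₀, (T - (m : ℤ))) ∣ (Delta a (max k n) : ℤ) := by
      apply hdvdΔ _ (Finset.erase_subset _ _)
      intro m hm heq
      rw [Finset.mem_erase] at hm
      have : m = m₀ := by omega
      exact hm.1 this
    -- assemble
    have step1 : (K ! : ℤ) ∣ (((Finset.Icc 1 K).lcm id : ℕ) : ℤ) *
        (∏ m ∈ (Finset.range K).erase m₀, (T - (m : ℤ))) := by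
      have h1 : (K ! : ℤ) ∣ (((Finset.Icc 1 K).lcm id : ℕ) : ℤ) * ((m₀ ! * c ! : ℕ) : ℤ) := by
        exact_mod_cast hA
      refine h1.trans (mul_dvd_mul_left _ ?_)
      rw [← hPabs]
      exact Int.natAbs_dvd.mpr dvd_rfl
    rw [← key] at step1
    have step2 : (((Finset.Icc 1 K).lcm id : ℕ) : ℤ) *
          (kappa T k h * (∏ m ∈ S.erase m₀, (T - (m : ℤ)))) ∣
        (((Finset.Icc 1 k).lcm id : ℕ) : ℤ) * (kappa T k h * (Delta a (max k n) : ℤ)) :=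
      mul_dvd_mul (Int.natCast_dvd_natCast.mpr hdKk) (mul_dvd_mul_left _ hD'')
    have final := step1.trans step2
    calc (K ! : ℤ) ∣ (((Finset.Icc 1 k).lcm id : ℕ) : ℤ) * (kappa T k h * (Delta a (max k n) : ℤ)) :=
          final
      _ = (((Finset.Icc 1 k).lcm id : ℕ) : ℤ) * (Delta a (max k n) : ℤ) * kappa T k h := by ring
  · -- no omitted factor vanishes
    push_neg at hTS
    have key : kappa T k h * (∏ m ∈ S, (T - (m : ℤ)))
        = ∏ m ∈ Finset.range K, (T - (m : ℤ)) := by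
      rw [hκ]
      exact Finset.prod_sdiff hSsub
    have h1 : (K ! : ℤ) ∣ ∏ m ∈ Finset.range K, (T - (m : ℤ)) :=
      factorial_dvd_prod_range K T hT0
    rw [← key] at h1
    have hD : (∏ m ∈ S, (T - (m : ℤ))) ∣ (Delta a (max k n) : ℤ) :=
      hdvdΔ S (subset_refl _) hTS
    have step2 : kappa T k h * (∏ m ∈ S, (T - (m : ℤ))) ∣
        kappa T k h * (Delta a (max k n) : ℤ) := mul_dvd_mul_left _ hD
    have final := h1.trans step2
    calc (K ! : ℤ) ∣ kappa T k h * (Delta a (max k n) : ℤ) := final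
      _ = kappa T k h * (Delta a (max k n) : ℤ) * 1 := by ring
      _ ∣ (((Finset.Icc 1 k).lcm id : ℕ) : ℤ) * (Delta a (max k n) : ℤ) * kappa T k h := by
          rw [show (((Finset.Icc 1 k).lcm id : ℕ) : ℤ) * (Delta a (max k n) : ℤ) * kappa T k h
            = kappa T k h * (Delta a (max k n) : ℤ) * (((Finset.Icc 1 k).lcm id : ℕ) : ℤ) by ring]
          exact mul_dvd_mul_left _ (one_dvd _)
end

section
/- Let a ≥ 1, n ≥ 2, h with 0 ≤ h ≤ a, and r ∈ ℚ with r ≥ 1 and rn ∈ ℕ. Let c_{i,j} ∈ ℤ (1 ≤ i ≤ a, 0 ≤ j ≤ n) be such that 𝔄₁ = 0 (equivalently F_n(t) = O(t^{−2}) as |t| → ∞). For 0 ≤ p ≤ h and z ∈ ℂ with |z| = 1, z ≠ 1, set S_{n,p}(z) = z^{rn} Σ_{t=rn+1}^∞ (F_n^{(p)}(t)·z^{−t} − F_n^{(p)}(−t)·z^{t}), a convergent series. Then for each p ∈ {0,…,h} there exists a polynomial V_p ∈ ℚ[X] of degree at most 2rn such that, for every z ∈ ℂ with |z| = 1 and z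 ≠ 1: S_{n,p}(z) = V_p(z) + Σ_{i=1}^a z^{rn}·P_i(z)·(−1)^p·(i)_p·( Li_{i+p}(1/z) − (−1)^{i+p}·Li_{i+p}(z) ). -/
/-- The coefficient `𝔄_d` of `t^{-d}` in the expansion at infinity of
`F_n(t) = ∑_{i=1}^a ∑_{j=0}^n c_{i,j}/(t+j)^i`. -/
def frakA (a n : ℕ) (c : ℕ → ℕ → ℤ) (d : ℕ) : ℤ :=
  (-1) ^ d * ∑ i ∈ Finset.Icc 1 (min a d), ∑ j ∈ Finset.range (n + 1),
    (-1) ^ i * (Nat.choose (d - 1) (i - 1) : ℤ) * (j : ℤ) ^ (d - i) * c i j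

/-- The `p`-th derivative `F_n^{(p)}(t) = ∑_{i,j} c_{i,j} (-1)^p (i)_p / (t+j)^{i+p}`. -/
noncomputable def Fnp (a n p : ℕ) (c : ℕ → ℕ → ℤ) (t : ℂ) : ℂ :=
  ∑ i ∈ Finset.Icc 1 a, ∑ j ∈ Finset.range (n + 1),
    (c i j : ℂ) * (-1) ^ p * (ascPochhammer ℂ p).eval (i : ℂ) / (t + (j : ℂ)) ^ (i + p)

/-- The polylogarithm `Li_i(z) = ∑_{k=1}^∞ z^k / k^i`, defined as the limit of the
partial sums (so that it is also meaningful for conditionally convergent boundary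
cases such as `i = 1`, `|z| = 1`, `z ≠ 1`). -/
noncomputable def polylog (i : ℕ) (z : ℂ) : ℂ :=
  Filter.limUnder Filter.atTop (fun T : ℕ => ∑ k ∈ Finset.Icc 1 T, z ^ k / (k : ℂ) ^ i)

open Filter Finset

/-- Partial sums of the polylogarithm series. -/
noncomputable def Spart (s : ℕ) (w : ℂ) (T : ℕ) : ℂ :=
  ∑ k ∈ Finset.Icc 1 T, w ^ k / (k : ℂ) ^ s

lemma Spart_Ioc (s : ℕ) (w : ℂ) (T : ℕ) :
    Spart s w T = ∑ k ∈ Finset.Ioc 0 T, w ^ k / (k : ℂ) ^ s := by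
  rw [Spart]
  apply Finset.sum_congr _ (fun _ _ => rfl)
  ext k; simp only [Finset.mem_Icc, Finset.mem_Ioc]; omega

lemma tendsto_Spart {s : ℕ} (hs : 1 ≤ s) {w : ℂ} (hw : ‖w‖ = 1) (hw1 : w ≠ 1) :
    Filter.Tendsto (Spart s w) Filter.atTop (nhds (polylog s w)) := by
  have hfa : Antitone (fun k : ℕ => (((k + 1 : ℕ) : ℝ) ^ s)⁻¹) := by
    intro x y hxy
    have h1 : (0:ℝ) < ((x+1:ℕ):ℝ) ^ s := by positivity
    have h2 : ((x+1:ℕ):ℝ) ^ s ≤ ((y+1:ℕ):ℝ) ^ s := by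
      have hle : ((x+1:ℕ):ℝ) ≤ ((y+1:ℕ):ℝ) := by exact_mod_cast Nat.succ_le_succ hxy
      exact pow_le_pow_left₀ (by positivity) hle s
    exact inv_anti₀ h1 h2
  have hf0 : Filter.Tendsto (fun k : ℕ => (((k + 1 : ℕ) : ℝ) ^ s)⁻¹) Filter.atTop (nhds 0) := by
    apply Filter.Tendsto.comp tendsto_inv_atTop_zero
    apply Filter.Tendsto.comp (tendsto_pow_atTop (by omega))
    have : Filter.Tendsto (fun k : ℕ => ((k:ℝ) + 1)) Filter.atTop Filter.atTop :=
      tendsto_atTop_add_const_right _ 1 tendsto_natCast_atTop_atTop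
    simpa using this
  have hzb : ∀ m : ℕ, ‖∑ i ∈ Finset.range m, w ^ (i+1)‖ ≤ 2 / ‖w - 1‖ := by
    intro m
    have hne : w - 1 ≠ 0 := sub_ne_zero.mpr hw1
    have h3 : ∑ i ∈ Finset.range m, w ^ (i+1) = w * ((w ^ m - 1) / (w - 1)) := by
      have h4 : ∑ i ∈ Finset.range m, w ^ (i+1) = w * ∑ i ∈ Finset.range m, w ^ i := by
        rw [Finset.mul_sum]
        apply Finset.sum_congr rfl
        intro i _; ring
      rw [h4, geom_sum_eq hw1]
    rw [h3, norm_mul, hw, one_mul, norm_div]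
    gcongr
    calc ‖w ^ m - 1‖ ≤ ‖w ^ m‖ + ‖(1:ℂ)‖ := norm_sub_le _ _
      _ = 2 := by simp [norm_pow, hw]; norm_num
  have hC := hfa.cauchySeq_series_mul_of_tendsto_zero_of_bounded hf0 hzb
  have heq : ∀ m : ℕ, (∑ i ∈ Finset.range m, (((i + 1 : ℕ) : ℝ) ^ s)⁻¹ • w ^ (i+1)) = Spart s w m := by
    intro m
    rw [Spart, show Finset.Icc 1 m = Finset.Ico 1 (m+1) by rw [Finset.Ico_add_one_right_eq_Icc],
      Finset.sum_Ico_eq_sum_range]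
    simp only [Nat.add_sub_cancel]
    apply Finset.sum_congr rfl
    intro i _
    rw [Complex.real_smul]
    push_cast
    rw [div_eq_mul_inv]
    ring_nf
  rw [funext heq] at hC
  obtain ⟨L, hL⟩ := cauchySeq_tendsto_of_complete hC
  have hpl : polylog s w = L := hL.limUnder_eq
  rw [hpl]; exact hL

/-- The constant `c_{ij} (-1)^p (i)_p`. -/
noncomputable def Kc (c : ℕ → ℕ → ℤ) (p i j : ℕ) : ℂ :=
  (c i j : ℂ) * (-1) ^ p * (((ascPochhammer ℕ p).eval i : ℕ) : ℂ)

/-- The `(i,j)` term of the series `S_{n,p}`. -/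
noncomputable def Gt (c : ℕ → ℕ → ℤ) (p R : ℕ) (z : ℂ) (i j t : ℕ) : ℂ :=
  Kc c p i j *
    ((z⁻¹) ^ (R + 1 + t) / ((R + 1 + t + j : ℕ) : ℂ) ^ (i + p)
      - (-1) ^ (i + p) * z ^ (R + 1 + t) / ((R + 1 + t - j : ℕ) : ℂ) ^ (i + p))

lemma hF_eq (a n p R : ℕ) (c : ℕ → ℕ → ℤ) (z : ℂ) (hz0 : z ≠ 0) (hnR : n ≤ R) (t : ℕ) :
    Fnp a n p c ((R + 1 + t : ℕ) : ℂ) * z ^ (-((R : ℤ) + 1 + t))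
        - Fnp a n p c (-((R + 1 + t : ℕ) : ℂ)) * z ^ ((R : ℤ) + 1 + t)
      = ∑ i ∈ Finset.Icc 1 a, ∑ j ∈ Finset.range (n + 1), Gt c p R z i j t := by
  have hzpow1 : z ^ (-((R : ℤ) + 1 + t)) = (z⁻¹) ^ (R + 1 + t) := by
    rw [show (-((R : ℤ) + 1 + t)) = -((R + 1 + t : ℕ) : ℤ) by push_cast; ring,
      zpow_neg, zpow_natCast, ← inv_pow]
  have hzpow2 : z ^ ((R : ℤ) + 1 + t) = z ^ (R + 1 + t) := by
    rw [show ((R : ℤ) + 1 + t) = ((R + 1 + t : ℕ) : ℤ) by push_cast; ring, zpow_natCast]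
  rw [Fnp, Fnp, hzpow1, hzpow2, Finset.sum_mul, Finset.sum_mul, ← Finset.sum_sub_distrib]
  apply Finset.sum_congr rfl; intro i _
  rw [Finset.sum_mul, Finset.sum_mul, ← Finset.sum_sub_distrib]
  apply Finset.sum_congr rfl; intro j hj
  have hij : j ≤ R + 1 + t := by have := Finset.mem_range.mp hj; omega
  have h1 : (((R+1+t : ℕ):ℂ) + (j:ℂ)) = ((R+1+t+j : ℕ):ℂ) := by push_cast; ring
  have h2 : (-(((R+1+t : ℕ)):ℂ) + (j:ℂ)) = -(((R+1+t-j : ℕ)):ℂ) := by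
    rw [Nat.cast_sub hij]; push_cast; ring
  have hpoch : (ascPochhammer ℂ p).eval (i:ℂ) = (((ascPochhammer ℕ p).eval i : ℕ) : ℂ) :=
    (ascPochhammer_eval_cast ℂ p i).symm
  rw [h1, h2, hpoch, Gt, Kc, neg_pow]
  have hsign : ((-1:ℂ)^(i+p))⁻¹ = (-1:ℂ)^(i+p) := by
    rw [← inv_pow, inv_neg, inv_one]
  simp only [div_eq_mul_inv, mul_inv, hsign]
  ring_nf
  simp only [inv_neg, inv_one]
  ring

lemma partial_eq (c : ℕ → ℕ → ℤ) (p R : ℕ) (z : ℂ) (hz0 : z ≠ 0) (i j : ℕ) (hjR : j ≤ R)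
    (T : ℕ) :
    ∑ t ∈ Finset.range T, Gt c p R z i j t
      = Kc c p i j *
          (z ^ j * (Spart (i+p) z⁻¹ (R+j+T) - Spart (i+p) z⁻¹ (R+j))
            - (-1) ^ (i+p) * z ^ j * (Spart (i+p) z (R-j+T) - Spart (i+p) z (R-j))) := by
  have hzz : ∀ m : ℕ, z ^ m * (z⁻¹) ^ m = 1 := by
    intro m; rw [← mul_pow, mul_inv_cancel₀ hz0, one_pow]
  have claim1 : ∑ t ∈ Finset.range T, (z⁻¹) ^ (R + 1 + t) / ((R + 1 + t + j : ℕ) : ℂ) ^ (i + p)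
      = z ^ j * (Spart (i+p) z⁻¹ (R+j+T) - Spart (i+p) z⁻¹ (R+j)) := by
    have hsplit : Spart (i+p) z⁻¹ (R+j)
          + (∑ k ∈ Finset.Ioc (R+j) (R+j+T), (z⁻¹) ^ k / (k : ℂ) ^ (i+p))
        = Spart (i+p) z⁻¹ (R+j+T) := by
      rw [Spart_Ioc, Spart_Ioc]
      exact Finset.sum_Ioc_consecutive _ (Nat.zero_le _) (Nat.le_add_right _ _)
    rw [← hsplit, add_sub_cancel_left,
      show Finset.Ioc (R+j) (R+j+T) = Finset.Ico (R+j+1) (R+j+T+1) by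
        ext x; simp only [Finset.mem_Ioc, Finset.mem_Ico]; omega,
      Finset.sum_Ico_eq_sum_range, show R+j+T+1 - (R+j+1) = T by omega, Finset.mul_sum]
    apply Finset.sum_congr rfl
    intro t _
    have h3 : R+j+1+t = R+1+t+j := by omega
    rw [h3]
    conv_rhs => rw [pow_add]
    linear_combination (-((z⁻¹) ^ (R+1+t) / ((R+1+t+j : ℕ) : ℂ) ^ (i+p))) * (hzz j)
  have claim2 : ∑ t ∈ Finset.range T, z ^ (R + 1 + t) / ((R + 1 + t - j : ℕ) : ℂ) ^ (i + p)
      = z ^ j * (Spart (i+p) z (R-j+T) - Spart (i+p) z (R-j)) := by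
    have hsplit : Spart (i+p) z (R-j)
          + (∑ k ∈ Finset.Ioc (R-j) (R-j+T), z ^ k / (k : ℂ) ^ (i+p))
        = Spart (i+p) z (R-j+T) := by
      rw [Spart_Ioc, Spart_Ioc]
      exact Finset.sum_Ioc_consecutive _ (Nat.zero_le _) (Nat.le_add_right _ _)
    rw [← hsplit, add_sub_cancel_left,
      show Finset.Ioc (R-j) (R-j+T) = Finset.Ico (R-j+1) (R-j+T+1) by
        ext x; simp only [Finset.mem_Ioc, Finset.mem_Ico]; omega,
      Finset.sum_Ico_eq_sum_range, show R-j+T+1 - (R-j+1) = T by omega, Finset.mul_sum]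
    apply Finset.sum_congr rfl
    intro t _
    have h4 : R+1+t-j = R-j+1+t := by omega
    rw [h4]
    have h5 : z ^ (R+1+t) = z ^ j * z ^ (R-j+1+t) := by
      rw [← pow_add]; congr 1; omega
    rw [h5, mul_div_assoc]
  calc ∑ t ∈ Finset.range T, Gt c p R z i j t
      = ∑ t ∈ Finset.range T,
          (Kc c p i j * ((z⁻¹) ^ (R+1+t) / ((R+1+t+j : ℕ) : ℂ) ^ (i+p))
            - Kc c p i j * (-1)^(i+p) * (z ^ (R+1+t) / ((R+1+t-j : ℕ) : ℂ) ^ (i+p))) :=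
        Finset.sum_congr rfl (fun t _ => by rw [Gt]; ring)
    _ = Kc c p i j * (∑ t ∈ Finset.range T, (z⁻¹) ^ (R+1+t) / ((R+1+t+j : ℕ) : ℂ) ^ (i+p))
          - Kc c p i j * (-1)^(i+p)
            * ∑ t ∈ Finset.range T, z ^ (R+1+t) / ((R+1+t-j : ℕ) : ℂ) ^ (i+p) := by
        rw [Finset.sum_sub_distrib, ← Finset.mul_sum, ← Finset.mul_sum]
    _ = _ := by rw [claim1, claim2]; ring


lemma G_tendsto (c : ℕ → ℕ → ℤ) (p R : ℕ) {z : ℂ} (hz : ‖z‖ = 1) (hz1 : z ≠ 1)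
    (i j : ℕ) (hi : 1 ≤ i) (hjR : j ≤ R) :
    Filter.Tendsto (fun T => ∑ t ∈ Finset.range T, Gt c p R z i j t) Filter.atTop
      (nhds (Kc c p i j *
        (z ^ j * (polylog (i+p) z⁻¹ - Spart (i+p) z⁻¹ (R+j))
          - (-1) ^ (i+p) * z ^ j * (polylog (i+p) z - Spart (i+p) z (R-j))))) := by
  have hz0 : z ≠ 0 := by intro h; rw [h] at hz; simp at hz
  have hzi : ‖z⁻¹‖ = 1 := by rw [norm_inv, hz]; norm_num
  have hzi1 : z⁻¹ ≠ 1 := fun h => hz1 (by rwa [inv_eq_one] at h)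
  have he : 1 ≤ i + p := by omega
  have t1 : Filter.Tendsto (fun T : ℕ => Spart (i+p) z⁻¹ (R+j+T)) Filter.atTop
      (nhds (polylog (i+p) z⁻¹)) := by
    have h := (tendsto_Spart he hzi hzi1).comp (Filter.tendsto_add_atTop_nat (R+j))
    exact h.congr (fun T => by simp only [Function.comp_apply]; rw [Nat.add_comm T _])
  have t2 : Filter.Tendsto (fun T : ℕ => Spart (i+p) z (R-j+T)) Filter.atTop
      (nhds (polylog (i+p) z)) := by
    have h := (tendsto_Spart he hz hz1).comp (Filter.tendsto_add_atTop_nat (R-j))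
    exact h.congr (fun T => by simp only [Function.comp_apply]; rw [Nat.add_comm T _])
  have h3 := (((t1.sub_const (Spart (i+p) z⁻¹ (R+j))).const_mul (z^j)).sub
      ((t2.sub_const (Spart (i+p) z (R-j))).const_mul ((-1:ℂ)^(i+p) * z^j))).const_mul
      (Kc c p i j)
  exact Filter.Tendsto.congr (fun T => (partial_eq c p R z hz0 i j hjR T).symm) h3

lemma hbase : Summable (fun t : ℕ => (((t:ℝ)+1) ^ 2)⁻¹) := by
  have h : Summable (fun n : ℕ => ((n : ℝ) ^ 2)⁻¹) :=
    Real.summable_nat_pow_inv.mpr (by norm_num)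
  have h2 := (summable_nat_add_iff 1).mpr h
  exact h2.congr (fun t => by push_cast; ring_nf)

lemma summable_piece (c : ℕ → ℕ → ℤ) (p R : ℕ) {z : ℂ} (hz : ‖z‖ = 1)
    (i j : ℕ) (hip : 2 ≤ i + p) (hjR : j ≤ R) :
    Summable (Gt c p R z i j) := by
  apply Summable.of_norm_bounded
    (g := fun t : ℕ => ‖Kc c p i j‖ * ((((t:ℝ)+1) ^ 2)⁻¹ + (((t:ℝ)+1) ^ 2)⁻¹))
    ((hbase.add hbase).mul_left _)
  intro t
  rw [Gt, norm_mul]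
  have key : ∀ M : ℕ, t + 1 ≤ M → (((t:ℝ)+1) ^ 2) ≤ ((M:ℕ):ℝ) ^ (i + p) := by
    intro M hM
    have h1 : ((t:ℝ)+1) ≤ ((M:ℕ):ℝ) := by exact_mod_cast hM
    have h0 : (1:ℝ) ≤ ((M:ℕ):ℝ) := by exact_mod_cast Nat.one_le_iff_ne_zero.mpr (by omega)
    calc ((t:ℝ)+1) ^ 2 ≤ ((M:ℕ):ℝ) ^ 2 := pow_le_pow_left₀ (by positivity) h1 2
      _ ≤ ((M:ℕ):ℝ) ^ (i+p) := pow_le_pow_right₀ h0 hip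
  have hA : ‖(z⁻¹) ^ (R+1+t) / ((R+1+t+j : ℕ) : ℂ) ^ (i+p)‖ ≤ (((t:ℝ)+1) ^ 2)⁻¹ := by
    rw [norm_div, norm_pow, norm_pow, norm_inv, hz, inv_one, one_pow, Complex.norm_natCast]
    rw [div_eq_mul_inv, one_mul]
    exact inv_anti₀ (by positivity) (key _ (by omega))
  have hB : ‖(-1:ℂ) ^ (i+p) * z ^ (R+1+t) / ((R+1+t-j : ℕ) : ℂ) ^ (i+p)‖
      ≤ (((t:ℝ)+1) ^ 2)⁻¹ := by
    rw [norm_div, norm_mul, norm_pow, norm_pow, norm_pow, norm_neg, norm_one, one_pow, hz,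
      one_pow, one_mul, Complex.norm_natCast]
    rw [div_eq_mul_inv, one_mul]
    exact inv_anti₀ (by positivity) (key _ (by omega))
  calc ‖Kc c p i j‖ * ‖_ - _‖
      ≤ ‖Kc c p i j‖ * (‖(z⁻¹) ^ (R+1+t) / ((R+1+t+j : ℕ) : ℂ) ^ (i+p)‖
          + ‖(-1:ℂ) ^ (i+p) * z ^ (R+1+t) / ((R+1+t-j : ℕ) : ℂ) ^ (i+p)‖) :=
        mul_le_mul_of_nonneg_left (norm_sub_le _ _) (norm_nonneg _)
    _ ≤ ‖Kc c p i j‖ * ((((t:ℝ)+1) ^ 2)⁻¹ + (((t:ℝ)+1) ^ 2)⁻¹) := by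
        apply mul_le_mul_of_nonneg_left (add_le_add hA hB) (norm_nonneg _)

lemma summable_row1 (c : ℕ → ℕ → ℤ) (n R : ℕ) (hnR : n ≤ R) {z : ℂ} (hz : ‖z‖ = 1)
    (hc1 : ∑ j ∈ Finset.range (n+1), c 1 j = 0) :
    Summable (fun t => ∑ j ∈ Finset.range (n+1), Gt c 0 R z 1 j t) := by
  have hc1' : ∑ j ∈ Finset.range (n+1), (c 1 j : ℂ) = 0 := by
    have := congrArg (fun x : ℤ => (x : ℂ)) hc1
    push_cast at this
    exact this
  have hrw : ∀ t, ∑ j ∈ Finset.range (n+1), Gt c 0 R z 1 j t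
      = ∑ j ∈ Finset.range (n+1), (c 1 j : ℂ) *
          ((z⁻¹) ^ (R+1+t) * (((R+1+t+j : ℕ) : ℂ)⁻¹ - ((R+1+t : ℕ) : ℂ)⁻¹)
            + z ^ (R+1+t) * (((R+1+t-j : ℕ) : ℂ)⁻¹ - ((R+1+t : ℕ) : ℂ)⁻¹)) := by
    intro t
    have hzero : ∑ j ∈ Finset.range (n+1),
        (c 1 j : ℂ) * (((z⁻¹) ^ (R+1+t) + z ^ (R+1+t)) * ((R+1+t : ℕ) : ℂ)⁻¹) = 0 := by
      rw [← Finset.sum_mul, hc1', zero_mul]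
    have hstep : ∑ j ∈ Finset.range (n+1), Gt c 0 R z 1 j t
        = ∑ j ∈ Finset.range (n+1), ((c 1 j : ℂ) *
            ((z⁻¹) ^ (R+1+t) * (((R+1+t+j : ℕ) : ℂ)⁻¹ - ((R+1+t : ℕ) : ℂ)⁻¹)
              + z ^ (R+1+t) * (((R+1+t-j : ℕ) : ℂ)⁻¹ - ((R+1+t : ℕ) : ℂ)⁻¹))
            + (c 1 j : ℂ) * (((z⁻¹) ^ (R+1+t) + z ^ (R+1+t)) * ((R+1+t : ℕ) : ℂ)⁻¹)) := by
      apply Finset.sum_congr rfl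
      intro j hj
      simp only [Gt, Kc, ascPochhammer_zero, Polynomial.eval_one, Nat.cast_one, pow_zero,
        pow_one, mul_one, one_mul]
      ring
    rw [hstep, Finset.sum_add_distrib, hzero, add_zero]
  apply Summable.congr _ (fun t => (hrw t).symm)
  apply summable_sum
  intro j hj
  have hjn : j ≤ n := by have := Finset.mem_range.mp hj; omega
  apply Summable.mul_left
  apply Summable.add
  · apply Summable.of_norm_bounded (g := fun t : ℕ => (n:ℝ) * ((((t:ℝ)+1) ^ 2)⁻¹ * 1))
      ((hbase.mul_right 1).mul_left _)
    intro t
    have h1 : ((R+1+t : ℕ) : ℂ) ≠ 0 := Nat.cast_ne_zero.mpr (by omega)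
    have h2 : ((R+1+t+j : ℕ) : ℂ) ≠ 0 := Nat.cast_ne_zero.mpr (by omega)
    have hdiff : ((R+1+t+j : ℕ) : ℂ)⁻¹ - ((R+1+t : ℕ) : ℂ)⁻¹
        = -(j:ℂ) / (((R+1+t+j : ℕ) : ℂ) * ((R+1+t : ℕ) : ℂ)) := by
      rw [inv_sub_inv h2 h1,
        show ((R+1+t : ℕ) : ℂ) - ((R+1+t+j : ℕ) : ℂ) = -(j:ℂ) by push_cast; ring]
    rw [norm_mul, norm_pow, norm_inv, hz, inv_one, one_pow, one_mul, hdiff, norm_div, norm_neg,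
      norm_mul, Complex.norm_natCast, Complex.norm_natCast, Complex.norm_natCast]
    rw [mul_one]
    have hden : ((t:ℝ)+1) ^ 2 ≤ ((R+1+t+j : ℕ):ℝ) * ((R+1+t : ℕ):ℝ) := by
      have e1 : ((t:ℝ)+1) ≤ ((R+1+t+j : ℕ):ℝ) := by exact_mod_cast by omega
      have e2 : ((t:ℝ)+1) ≤ ((R+1+t : ℕ):ℝ) := by exact_mod_cast by omega
      calc ((t:ℝ)+1) ^ 2 = ((t:ℝ)+1) * ((t:ℝ)+1) := sq ((t:ℝ)+1)
        _ ≤ _ := mul_le_mul e1 e2 (by positivity) (by positivity)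
    calc (j:ℝ) / (((R+1+t+j : ℕ):ℝ) * ((R+1+t : ℕ):ℝ))
        ≤ (n:ℝ) / (((t:ℝ)+1) ^ 2) := by
          apply div_le_div₀ (by positivity) (by exact_mod_cast hjn) (by positivity) hden
      _ = (n:ℝ) * ((((t:ℝ)+1) ^ 2)⁻¹) := by rw [div_eq_mul_inv]
  · apply Summable.of_norm_bounded (g := fun t : ℕ => (n:ℝ) * ((((t:ℝ)+1) ^ 2)⁻¹ * 1))
      ((hbase.mul_right 1).mul_left _)
    intro t
    have hj' : j ≤ R+1+t := by omega
    have h1 : ((R+1+t : ℕ) : ℂ) ≠ 0 := Nat.cast_ne_zero.mpr (by omega)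
    have h2 : ((R+1+t-j : ℕ) : ℂ) ≠ 0 := Nat.cast_ne_zero.mpr (by omega)
    have hdiff : ((R+1+t-j : ℕ) : ℂ)⁻¹ - ((R+1+t : ℕ) : ℂ)⁻¹
        = (j:ℂ) / (((R+1+t-j : ℕ) : ℂ) * ((R+1+t : ℕ) : ℂ)) := by
      rw [inv_sub_inv h2 h1,
        show ((R+1+t : ℕ) : ℂ) - ((R+1+t-j : ℕ) : ℂ) = (j:ℂ) by
          rw [Nat.cast_sub hj']; push_cast; ring]
    rw [norm_mul, norm_pow, hz, one_pow, one_mul, hdiff, norm_div,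
      norm_mul, Complex.norm_natCast, Complex.norm_natCast, Complex.norm_natCast]
    rw [mul_one]
    have hden : ((t:ℝ)+1) ^ 2 ≤ ((R+1+t-j : ℕ):ℝ) * ((R+1+t : ℕ):ℝ) := by
      have e1 : ((t:ℝ)+1) ≤ ((R+1+t-j : ℕ):ℝ) := by exact_mod_cast by omega
      have e2 : ((t:ℝ)+1) ≤ ((R+1+t : ℕ):ℝ) := by exact_mod_cast by omega
      calc ((t:ℝ)+1) ^ 2 = ((t:ℝ)+1) * ((t:ℝ)+1) := sq ((t:ℝ)+1)
        _ ≤ _ := mul_le_mul e1 e2 (by positivity) (by positivity)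
    calc (j:ℝ) / (((R+1+t-j : ℕ):ℝ) * ((R+1+t : ℕ):ℝ))
        ≤ (n:ℝ) / (((t:ℝ)+1) ^ 2) := by
          apply div_le_div₀ (by positivity) (by exact_mod_cast hjn) (by positivity) hden
      _ = (n:ℝ) * ((((t:ℝ)+1) ^ 2)⁻¹) := by rw [div_eq_mul_inv]

lemma summable_G (a n p R : ℕ) (c : ℕ → ℕ → ℤ) (ha : 1 ≤ a) (hnR : n ≤ R) {z : ℂ}
    (hz : ‖z‖ = 1) (hc1 : ∑ j ∈ Finset.range (n+1), c 1 j = 0) :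
    Summable (fun t => ∑ i ∈ Finset.Icc 1 a, ∑ j ∈ Finset.range (n+1), Gt c p R z i j t) := by
  rcases Nat.eq_zero_or_pos p with hp0 | hp1
  · subst hp0
    have hsplit : ∀ t, ∑ i ∈ Finset.Icc 1 a, ∑ j ∈ Finset.range (n+1), Gt c 0 R z i j t
        = (∑ j ∈ Finset.range (n+1), Gt c 0 R z 1 j t)
          + ∑ i ∈ Finset.Icc 2 a, ∑ j ∈ Finset.range (n+1), Gt c 0 R z i j t := by
      intro t
      rw [show Finset.Icc 1 a = insert 1 (Finset.Icc 2 a) by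
          ext x; simp only [Finset.mem_Icc, Finset.mem_insert]; omega,
        Finset.sum_insert (by simp)]
    refine Summable.congr ?_ (fun t => (hsplit t).symm)
    apply Summable.add
    · exact summable_row1 c n R hnR hz hc1
    · apply summable_sum
      intro i hi
      apply summable_sum
      intro j hj
      refine summable_piece c 0 R hz i j ?_ ?_
      · have := (Finset.mem_Icc.mp hi).1; omega
      · have := Finset.mem_range.mp hj; omega
  · apply summable_sum
    intro i hi
    apply summable_sum
    intro j hj
    refine summable_piece c p R hz i j ?_ ?_
    · have := (Finset.mem_Icc.mp hi).1; omega
    · have := Finset.mem_range.mp hj; omega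

/-- Lemma 5 of the paper (expansion of `S_{n,p}` in polylogarithms): there is a
polynomial `V_p ∈ ℚ[X]` of degree ≤ `2rn` with
`S_{n,p}(z) = V_p(z) + ∑_{i=1}^a z^{rn} P_i(z) (-1)^p (i)_p (Li_{i+p}(1/z) - (-1)^{i+p} Li_{i+p}(z))`
for `|z| = 1`, `z ≠ 1`. Here `R = rn ∈ ℕ` and
`S_{n,p}(z) = z^{rn} ∑_{t=rn+1}^∞ (F_n^{(p)}(t) z^{-t} - F_n^{(p)}(-t) z^t)`. -/
theorem stmt14 (a n hh : ℕ) (ha : 1 ≤ a) (hn : 2 ≤ n) (hha : hh ≤ a)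
    (r : ℚ) (hr : 1 ≤ r) (R : ℕ) (hR : (r * n : ℚ) = (R : ℚ))
    (c : ℕ → ℕ → ℤ) (hA1 : frakA a n c 1 = 0)
    (p : ℕ) (hp : p ≤ hh) :
    ∃ V : Polynomial ℚ, V.natDegree ≤ 2 * R ∧
      ∀ z : ℂ, ‖z‖ = 1 → z ≠ 1 →
        z ^ R * ∑' t : ℕ,
            (Fnp a n p c ((R + 1 + t : ℕ) : ℂ) * z ^ (-((R : ℤ) + 1 + t))
              - Fnp a n p c (-((R + 1 + t : ℕ) : ℂ)) * z ^ ((R : ℤ) + 1 + t))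
          = Polynomial.aeval z V
            + ∑ i ∈ Finset.Icc 1 a, z ^ R *
                (∑ j ∈ Finset.range (n + 1), (c i j : ℂ) * z ^ j) * (-1) ^ p *
                ((ascPochhammer ℂ p).eval (i : ℂ)) *
                (polylog (i + p) z⁻¹ - (-1) ^ (i + p) * polylog (i + p) z) := by
  have hnR : n ≤ R := by
    have h1 : (n:ℚ) ≤ (R:ℚ) := by
      rw [← hR]
      nlinarith [Nat.cast_nonneg (α := ℚ) n]
    exact_mod_cast h1
  have hc1 : ∑ j ∈ Finset.range (n+1), c 1 j = 0 := by
    have h2 : frakA a n c 1 = ∑ j ∈ Finset.range (n + 1), c 1 j := by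
      rw [frakA, show min a 1 = 1 by omega, Finset.Icc_self, Finset.sum_singleton]
      simp
    rw [h2] at hA1; exact hA1
  refine ⟨∑ i ∈ Finset.Icc 1 a, ∑ j ∈ Finset.range (n+1),
      Polynomial.C ((c i j : ℚ) * (-1)^p * (((ascPochhammer ℕ p).eval i : ℕ) : ℚ)) *
        (Polynomial.C ((-1:ℚ)^(i+p)) *
            ∑ k ∈ Finset.Icc 1 (R-j), Polynomial.C (((k:ℚ)^(i+p))⁻¹) * Polynomial.X ^ (R+j+k)
          - ∑ k ∈ Finset.Icc 1 (R+j), Polynomial.C (((k:ℚ)^(i+p))⁻¹) * Polynomial.X ^ (R+j-k)),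
    ?_, ?_⟩
  · apply Polynomial.natDegree_sum_le_of_forall_le
    intro i _
    apply Polynomial.natDegree_sum_le_of_forall_le
    intro j hj
    have hjn : j ≤ n := by have := Finset.mem_range.mp hj; omega
    refine le_trans (Polynomial.natDegree_mul_le) ?_
    rw [Polynomial.natDegree_C, zero_add]
    refine le_trans (Polynomial.natDegree_sub_le _ _) ?_
    rw [max_le_iff]
    constructor
    · refine le_trans (Polynomial.natDegree_mul_le) ?_
      rw [Polynomial.natDegree_C, zero_add]
      apply Polynomial.natDegree_sum_le_of_forall_le
      intro k hk
      refine le_trans (Polynomial.natDegree_mul_le) ?_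
      rw [Polynomial.natDegree_C, zero_add, Polynomial.natDegree_X_pow]
      have := (Finset.mem_Icc.mp hk).2
      omega
    · apply Polynomial.natDegree_sum_le_of_forall_le
      intro k hk
      refine le_trans (Polynomial.natDegree_mul_le) ?_
      rw [Polynomial.natDegree_C, zero_add, Polynomial.natDegree_X_pow]
      have := (Finset.mem_Icc.mp hk).2
      omega
  · intro z hzabs hz1
    have hz : ‖z‖ = 1 := by exact hzabs
    have hz0 : z ≠ 0 := by intro h; rw [h] at hz; simp at hz
    have hzz : ∀ m : ℕ, z ^ m * (z⁻¹) ^ m = 1 := fun m => by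
      rw [← mul_pow, mul_inv_cancel₀ hz0, one_pow]
    have hsum := summable_G a n p R c ha hnR hz hc1
    have h1 : (∑' (t:ℕ), (Fnp a n p c ((R + 1 + t : ℕ) : ℂ) * z ^ (-((R : ℤ) + 1 + t))
          - Fnp a n p c (-((R + 1 + t : ℕ) : ℂ)) * z ^ ((R : ℤ) + 1 + t)))
        = ∑' (t:ℕ), ∑ i ∈ Finset.Icc 1 a, ∑ j ∈ Finset.range (n+1), Gt c p R z i j t :=
      tsum_congr (fun t => hF_eq a n p R c z hz0 hnR t)
    have hlim : Filter.Tendsto (fun T => ∑ i ∈ Finset.Icc 1 a, ∑ j ∈ Finset.range (n+1),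
          ∑ t ∈ Finset.range T, Gt c p R z i j t) Filter.atTop
        (nhds (∑ i ∈ Finset.Icc 1 a, ∑ j ∈ Finset.range (n+1), Kc c p i j *
          (z ^ j * (polylog (i+p) z⁻¹ - Spart (i+p) z⁻¹ (R+j))
            - (-1) ^ (i+p) * z ^ j * (polylog (i+p) z - Spart (i+p) z (R-j))))) := by
      apply tendsto_finset_sum
      intro i hi
      apply tendsto_finset_sum
      intro j hj
      exact G_tendsto c p R hz hz1 i j (Finset.mem_Icc.mp hi).1
        (by have := Finset.mem_range.mp hj; omega)
    have hQ := hsum.hasSum.tendsto_sum_nat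
    have hswap : ∀ T, ∑ t ∈ Finset.range T, ∑ i ∈ Finset.Icc 1 a,
          ∑ j ∈ Finset.range (n+1), Gt c p R z i j t
        = ∑ i ∈ Finset.Icc 1 a, ∑ j ∈ Finset.range (n+1),
            ∑ t ∈ Finset.range T, Gt c p R z i j t := by
      intro T
      rw [Finset.sum_comm]
      exact Finset.sum_congr rfl (fun i _ => Finset.sum_comm)
    simp only [hswap] at hQ
    have h2 := tendsto_nhds_unique hQ hlim
    rw [h1, h2]
    -- final algebra
    have hSw : ∀ i j : ℕ, j ≤ R →
        z^R * z^j * Spart (i+p) z⁻¹ (R+j)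
          = ∑ k ∈ Finset.Icc 1 (R+j), (((k:ℕ):ℂ)^(i+p))⁻¹ * z^(R+j-k) := by
      intro i j hjR
      rw [Spart, Finset.mul_sum]
      apply Finset.sum_congr rfl
      intro k hk
      obtain ⟨hk1, hk2⟩ := Finset.mem_Icc.mp hk
      have h5 : z^R * z^j = z^(R+j-k) * z^k := by
        rw [← pow_add, ← pow_add]; congr 1; omega
      rw [h5, div_eq_mul_inv]
      linear_combination (z^(R+j-k) * ((((k:ℕ):ℂ)^(i+p))⁻¹)) * hzz k
    have hSz : ∀ i j : ℕ, j ≤ R →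
        z^R * z^j * Spart (i+p) z (R-j)
          = ∑ k ∈ Finset.Icc 1 (R-j), (((k:ℕ):ℂ)^(i+p))⁻¹ * z^(R+j+k) := by
      intro i j hjR
      rw [Spart, Finset.mul_sum]
      apply Finset.sum_congr rfl
      intro k hk
      have h5 : z^R * z^j * z^k = z^(R+j+k) := by rw [← pow_add, ← pow_add]
      rw [div_eq_mul_inv]
      linear_combination ((((k:ℕ):ℂ)^(i+p))⁻¹) * h5
    have hV : (Polynomial.aeval z) (∑ i ∈ Finset.Icc 1 a, ∑ j ∈ Finset.range (n+1),
        Polynomial.C ((c i j : ℚ) * (-1)^p * (((ascPochhammer ℕ p).eval i : ℕ) : ℚ)) *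
          (Polynomial.C ((-1:ℚ)^(i+p)) *
              ∑ k ∈ Finset.Icc 1 (R-j), Polynomial.C (((k:ℚ)^(i+p))⁻¹) * Polynomial.X ^ (R+j+k)
            - ∑ k ∈ Finset.Icc 1 (R+j), Polynomial.C (((k:ℚ)^(i+p))⁻¹) * Polynomial.X ^ (R+j-k)))
        = ∑ i ∈ Finset.Icc 1 a, ∑ j ∈ Finset.range (n+1), Kc c p i j *
            ((-1:ℂ)^(i+p) * ∑ k ∈ Finset.Icc 1 (R-j), (((k:ℕ):ℂ)^(i+p))⁻¹ * z^(R+j+k)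
              - ∑ k ∈ Finset.Icc 1 (R+j), (((k:ℕ):ℂ)^(i+p))⁻¹ * z^(R+j-k)) := by
      simp only [map_sum, map_mul, map_sub, map_pow, Polynomial.aeval_C, Polynomial.aeval_X,
        eq_ratCast, Kc]
      push_cast [-ascPochhammer_eval_cast]
      apply Finset.sum_congr rfl
      intro i _
      apply Finset.sum_congr rfl
      intro j _
      ring
    have hmain : ∀ i ∈ Finset.Icc 1 a,
        z^R * (∑ j ∈ Finset.range (n+1), Kc c p i j *
          (z ^ j * (polylog (i+p) z⁻¹ - Spart (i+p) z⁻¹ (R+j))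
            - (-1) ^ (i+p) * z ^ j * (polylog (i+p) z - Spart (i+p) z (R-j))))
        = z ^ R * (∑ j ∈ Finset.range (n + 1), (c i j : ℂ) * z ^ j) * (-1) ^ p *
              ((ascPochhammer ℂ p).eval (i : ℂ)) *
              (polylog (i + p) z⁻¹ - (-1) ^ (i + p) * polylog (i + p) z)
          + ∑ j ∈ Finset.range (n+1), Kc c p i j *
              ((-1:ℂ)^(i+p) * ∑ k ∈ Finset.Icc 1 (R-j), (((k:ℕ):ℂ)^(i+p))⁻¹ * z^(R+j+k)
                - ∑ k ∈ Finset.Icc 1 (R+j), (((k:ℕ):ℂ)^(i+p))⁻¹ * z^(R+j-k)) := by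
      intro i hi
      have perj : ∀ j ∈ Finset.range (n+1),
          z^R * (Kc c p i j *
            (z ^ j * (polylog (i+p) z⁻¹ - Spart (i+p) z⁻¹ (R+j))
              - (-1) ^ (i+p) * z ^ j * (polylog (i+p) z - Spart (i+p) z (R-j))))
          = ((c i j : ℂ) * z ^ j) * ((-1:ℂ)^p * (((ascPochhammer ℕ p).eval i : ℕ):ℂ) * z^R *
                (polylog (i + p) z⁻¹ - (-1) ^ (i + p) * polylog (i + p) z))
            + Kc c p i j *
              ((-1:ℂ)^(i+p) * ∑ k ∈ Finset.Icc 1 (R-j), (((k:ℕ):ℂ)^(i+p))⁻¹ * z^(R+j+k)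
                - ∑ k ∈ Finset.Icc 1 (R+j), (((k:ℕ):ℂ)^(i+p))⁻¹ * z^(R+j-k)) := by
        intro j hj
        have hjR : j ≤ R := by have := Finset.mem_range.mp hj; omega
        have h6 := hSw i j hjR
        have h7 := hSz i j hjR
        rw [Kc]
        linear_combination ((c i j : ℂ) * (-1:ℂ)^p * (((ascPochhammer ℕ p).eval i : ℕ):ℂ)) *
          ((-1:ℂ)^(i+p) * h7 - h6)
      rw [Finset.mul_sum, Finset.sum_congr rfl perj, Finset.sum_add_distrib, ← Finset.sum_mul,
        show (ascPochhammer ℂ p).eval (i:ℂ) = (((ascPochhammer ℕ p).eval i : ℕ):ℂ) from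
          (ascPochhammer_eval_cast ℂ p i).symm]
      ring
    rw [Finset.mul_sum, Finset.sum_congr rfl hmain, Finset.sum_add_distrib, hV]
    ring
end

section
/- Let b ≥ 1 and m ≥ 0 be integers, and let P₁, …, P_b ∈ ℂ[z] be polynomials with P_b not identically zero. Let D be a nonempty open disk contained in ℂ ∖ {0} on which a holomorphic branch of log is chosen, and for 1 ≤ β ≤ b define the holomorphic function h̃_β on D by h̃_β(z) = Σ_{i=β}^{b} z^m·P_i(z)·(−log z)^{i−β}/(i−β)!. Then the functions h̃₁, …, h̃_b are linearly independent over ℂ. -/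
open Polynomial Finset

lemma key_poly {n : ℂ} (hn : n ≠ 0) {c d : Polynomial ℂ}
    (h : C n * c ^ 2 = -(X * wronskian c d)) : c = 0 := by
  by_contra hc
  have hW : wronskian c d ≠ 0 := by
    intro h0
    rw [h0, mul_zero, neg_zero, mul_eq_zero] at h
    rcases h with h | h
    · exact hn (by simpa using h)
    · exact hc (pow_eq_zero_iff (by norm_num) |>.mp h)
  have hd : d ≠ 0 := fun h0 => hW (by simp [h0])
  set p := c.natDegree with hp
  set q := d.natDegree with hq
  have ha : c.coeff p ≠ 0 := Polynomial.leadingCoeff_ne_zero.mpr hc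
  have hb : d.coeff q ≠ 0 := Polynomial.leadingCoeff_ne_zero.mpr hd
  have hdegW : (wronskian c d).natDegree < p + q := natDegree_wronskian_lt_add hW
  have hdeg : 2 * p = 1 + (wronskian c d).natDegree := by
    have h1 : (C n * c ^ 2).natDegree = 2 * p := by
      rw [natDegree_C_mul hn, natDegree_pow]
    have h2 : (-(X * wronskian c d)).natDegree = 1 + (wronskian c d).natDegree := by
      rw [natDegree_neg, natDegree_mul X_ne_zero hW, natDegree_X]
    rw [← h1, h, h2]
  have hp1 : 1 ≤ p := by omega
  have hpq : p ≤ q := by omega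
  have hq1 : 1 ≤ q := le_trans hp1 hpq
  have hcoeff : (wronskian c d).coeff (p + q - 1) =
      c.coeff p * d.coeff q * ((q : ℂ) - (p : ℂ)) := by
    have e1 : (c * derivative d).coeff (p + (q - 1)) = c.coeff p * ((derivative d).coeff (q - 1)) :=
      coeff_mul_add_eq_of_natDegree_le le_rfl (natDegree_derivative_le d)
    have e2 : (derivative c * d).coeff ((p - 1) + q) =
        ((derivative c).coeff (p - 1)) * d.coeff q :=
      coeff_mul_add_eq_of_natDegree_le (natDegree_derivative_le c) le_rfl
    have eq1 : p + (q - 1) = p + q - 1 := by omega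
    have eq2 : (p - 1) + q = p + q - 1 := by omega
    rw [eq1] at e1; rw [eq2] at e2
    have hq' : q - 1 + 1 = q := by omega
    have hp' : p - 1 + 1 = p := by omega
    have d1 : (derivative d).coeff (q - 1) = d.coeff q * (q : ℂ) := by
      rw [coeff_derivative, hq', Nat.cast_sub hq1]; push_cast; ring
    have d2 : (derivative c).coeff (p - 1) = c.coeff p * (p : ℂ) := by
      rw [coeff_derivative, hp', Nat.cast_sub hp1]; push_cast; ring
    rw [wronskian, Polynomial.coeff_sub, e1, e2, d1, d2]
    ring
  rcases eq_or_lt_of_le hpq with heq | hlt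
  · have : (wronskian c d).coeff (2 * p - 1) = 0 := by
      rw [show 2 * p - 1 = p + q - 1 by omega, hcoeff, ← heq]
      simp
    have hW2 : (wronskian c d).natDegree = 2 * p - 1 := by omega
    exact hW (Polynomial.leadingCoeff_eq_zero.mp (by rw [leadingCoeff, hW2]; exact this))
  · have hne : (wronskian c d).coeff (p + q - 1) ≠ 0 := by
      rw [hcoeff]
      refine mul_ne_zero (mul_ne_zero ha hb) (sub_ne_zero.mpr ?_)
      exact_mod_cast fun h => absurd (Nat.cast_injective h : q = p) (by omega)
    have := Polynomial.le_natDegree_of_ne_zero hne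
    omega

lemma core (z₁ : ℂ) (ρ : ℝ) (hρ : 0 < ρ) (hD : Metric.ball z₁ ρ ⊆ ({0}ᶜ : Set ℂ))
    (L : ℂ → ℂ) (hL : DifferentiableOn ℂ L (Metric.ball z₁ ρ))
    (hLlog : ∀ z ∈ Metric.ball z₁ ρ, Complex.exp (L z) = z) :
    ∀ N : ℕ, ∀ c : ℕ → Polynomial ℂ,
      (∀ z ∈ Metric.ball z₁ ρ,
        ∑ j ∈ Finset.range (N + 1), (c j).eval z * (L z) ^ j = 0) →
      ∀ j ≤ N, c j = 0 := by
  have hball : (Metric.ball z₁ ρ).Infinite :=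
    infinite_of_mem_nhds z₁ (Metric.ball_mem_nhds z₁ hρ)
  have hzero : ∀ p : Polynomial ℂ, (∀ z ∈ Metric.ball z₁ ρ, p.eval z = 0) → p = 0 := by
    intro p hp
    exact p.eq_zero_of_infinite_isRoot (hball.mono fun z hz => hp z hz)
  have hz0 : ∀ z ∈ Metric.ball z₁ ρ, z ≠ 0 := by
    intro z hz h0
    exact (hD hz) (by simp [h0])
  -- derivative of L
  have hLd : ∀ z ∈ Metric.ball z₁ ρ, HasDerivAt L z⁻¹ z := by
    intro z hz
    have h1 : DifferentiableAt ℂ L z :=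
      hL.differentiableAt (Metric.isOpen_ball.mem_nhds hz)
    have h2 : HasDerivAt L (deriv L z) z := h1.hasDerivAt
    have h3 : HasDerivAt (fun w => Complex.exp (L w)) (Complex.exp (L z) * deriv L z) z :=
      (Complex.hasDerivAt_exp (L z)).comp z h2
    have heq : (fun w : ℂ => w) =ᶠ[nhds z] fun w => Complex.exp (L w) :=
      (Filter.eventuallyEq_of_mem (Metric.isOpen_ball.mem_nhds hz) hLlog).symm
    have h5 : HasDerivAt (fun w : ℂ => w) (Complex.exp (L z) * deriv L z) z :=
      h3.congr_of_eventuallyEq heq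
    have h6 : Complex.exp (L z) * deriv L z = 1 := h5.unique (hasDerivAt_id z)
    rw [hLlog z hz] at h6
    have : deriv L z = z⁻¹ := eq_inv_of_mul_eq_one_right h6
    rwa [← this]
  intro N
  induction N with
  | zero =>
    intro c hc j hj
    interval_cases j
    refine hzero _ fun z hz => ?_
    simpa using hc z hz
  | succ N ih =>
    intro c hc
    -- derivative identity
    have hder : ∀ z ∈ Metric.ball z₁ ρ,
        ∑ j ∈ Finset.range (N + 2),
          ((derivative (c j)).eval z * (L z) ^ j +
            (c j).eval z * ((j : ℂ) * (L z) ^ (j - 1) * z⁻¹)) = 0 := by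
      intro z hz
      have hF : HasDerivAt (fun w => ∑ j ∈ Finset.range (N + 2), (c j).eval w * (L w) ^ j)
          (∑ j ∈ Finset.range (N + 2),
            ((derivative (c j)).eval z * (L z) ^ j +
              (c j).eval z * ((j : ℂ) * (L z) ^ (j - 1) * z⁻¹))) z := by
        refine HasDerivAt.fun_sum fun j _ => ?_
        exact ((c j).hasDerivAt z).mul ((hLd z hz).pow j)
      have hF0 : HasDerivAt (fun w => ∑ j ∈ Finset.range (N + 2), (c j).eval w * (L w) ^ j)
          (0 : ℂ) z := by
        refine (hasDerivAt_const z (0:ℂ)).congr_of_eventuallyEq ?_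
        exact Filter.eventuallyEq_of_mem (Metric.isOpen_ball.mem_nhds hz) hc
      exact hF.unique hF0
    -- the reduced family
    set e : ℕ → Polynomial ℂ := fun j =>
      X * ((c (N + 1)) * derivative (c j) - derivative (c (N + 1)) * (c j)) +
        C ((j : ℂ) + 1) * ((c (N + 1)) * (c (j + 1))) with he_def
    have key : ∀ z ∈ Metric.ball z₁ ρ,
        ∑ j ∈ Finset.range (N + 1), (e j).eval z * (L z) ^ j = 0 := by
      intro z hz
      have hzne : z ≠ 0 := hz0 z hz
      set w := L z with hw
      set t := (c (N + 1)).eval z with ht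
      set t' := (derivative (c (N + 1))).eval z with ht'
      set T1 := ∑ j ∈ Finset.range (N + 1), (c j).eval z * w ^ j with hT1
      set T2 := ∑ j ∈ Finset.range (N + 1), (derivative (c j)).eval z * w ^ j with hT2
      set T3 := ∑ j ∈ Finset.range (N + 1), ((j : ℂ) + 1) * ((c (j + 1)).eval z * w ^ j)
        with hT3
      have f1 : T1 + t * w ^ (N + 1) = 0 := by
        have := hc z hz
        rwa [Finset.sum_range_succ] at this
      have f2 : z * T2 + z * t' * w ^ (N + 1) + T3 = 0 := by
        have h0 := hder z hz
        have h1 : z * ∑ j ∈ Finset.range (N + 2),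
            ((derivative (c j)).eval z * w ^ j +
              (c j).eval z * ((j : ℂ) * w ^ (j - 1) * z⁻¹)) = 0 := by rw [h0, mul_zero]
        rw [Finset.mul_sum] at h1
        have h2 : ∀ j ∈ Finset.range (N + 2),
            z * ((derivative (c j)).eval z * w ^ j +
              (c j).eval z * ((j : ℂ) * w ^ (j - 1) * z⁻¹)) =
            z * ((derivative (c j)).eval z * w ^ j) +
              (j : ℂ) * ((c j).eval z * w ^ (j - 1)) := by
          intro j _
          field_simp
        rw [Finset.sum_congr rfl h2, Finset.sum_add_distrib] at h1
        have h3 : ∑ j ∈ Finset.range (N + 2),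
            (j : ℂ) * ((c j).eval z * w ^ (j - 1)) = T3 := by
          rw [Finset.sum_range_succ' (fun j => (j : ℂ) * ((c j).eval z * w ^ (j - 1)))]
          simp only [Nat.cast_zero, zero_mul, add_zero, Nat.cast_add, Nat.cast_one,
            Nat.add_sub_cancel]
          exact hT3.symm
        have h4 : ∑ j ∈ Finset.range (N + 2),
            z * ((derivative (c j)).eval z * w ^ j) =
            z * T2 + z * (t' * w ^ (N + 1)) := by
          rw [Finset.sum_range_succ, hT2, Finset.mul_sum]
        rw [h3, h4] at h1
        linear_combination h1
      have expand : ∀ j ∈ Finset.range (N + 1), (e j).eval z * w ^ j =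
          z * t * ((derivative (c j)).eval z * w ^ j)
            - z * t' * ((c j).eval z * w ^ j)
            + t * (((j : ℂ) + 1) * ((c (j + 1)).eval z * w ^ j)) := by
        intro j _
        simp only [he_def, eval_add, eval_mul, eval_X, eval_C, eval_sub]
        ring
      calc ∑ j ∈ Finset.range (N + 1), (e j).eval z * w ^ j
          = ∑ j ∈ Finset.range (N + 1),
              (z * t * ((derivative (c j)).eval z * w ^ j)
                - z * t' * ((c j).eval z * w ^ j)
                + t * (((j : ℂ) + 1) * ((c (j + 1)).eval z * w ^ j))) :=
            Finset.sum_congr rfl expand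
        _ = z * t * T2 - z * t' * T1 + t * T3 := by
            rw [Finset.sum_add_distrib, Finset.sum_sub_distrib, ← Finset.mul_sum,
              ← Finset.mul_sum, ← Finset.mul_sum]
        _ = 0 := by linear_combination t * f2 - z * t' * f1
    have he : ∀ j ≤ N, e j = 0 := ih e key
    -- deduce c (N+1) = 0
    have hcM : c (N + 1) = 0 := by
      have hN := he N le_rfl
      simp only [he_def] at hN
      have : C ((N : ℂ) + 1) * (c (N + 1)) ^ 2 =
          -(X * wronskian (c (N + 1)) (c N)) := by
        rw [wronskian]
        linear_combination hN
      exact key_poly (by exact_mod_cast Nat.succ_ne_zero N) this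
    have hc' : ∀ z ∈ Metric.ball z₁ ρ,
        ∑ j ∈ Finset.range (N + 1), (c j).eval z * (L z) ^ j = 0 := by
      intro z hz
      have := hc z hz
      rwa [Finset.sum_range_succ, hcM, eval_zero, zero_mul, add_zero] at this
    intro j hj
    rcases Nat.lt_succ_iff_lt_or_eq.mp (Nat.lt_succ_of_le hj) with h | h
    · exact ih c hc' j (Nat.lt_succ_iff.mp h)
    · rw [h]; exact hcM

set_option maxHeartbeats 1000000 in
/-- Step 5 of the proof of Proposition 2: the functions
`h̃_β(z) = ∑_{i=β}^b z^m P_i(z) (-log z)^{i-β}/(i-β)!` (for `1 ≤ β ≤ b`, with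
`P_b ≠ 0`) are linearly independent over `ℂ` as functions on an open disk
`D ⊆ ℂ ∖ {0}` equipped with a holomorphic branch `L` of the logarithm. -/
theorem stmt18 (b m : ℕ) (hb : 1 ≤ b) (P : ℕ → Polynomial ℂ) (hPb : P b ≠ 0)
    (z₁ : ℂ) (ρ : ℝ) (hρ : 0 < ρ) (hD : Metric.ball z₁ ρ ⊆ ({0}ᶜ : Set ℂ))
    (L : ℂ → ℂ) (hL : DifferentiableOn ℂ L (Metric.ball z₁ ρ))
    (hLlog : ∀ z ∈ Metric.ball z₁ ρ, Complex.exp (L z) = z)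
    (μ : ℕ → ℂ)
    (hsum : ∀ z ∈ Metric.ball z₁ ρ,
      ∑ β ∈ Finset.Icc 1 b, μ β *
        ∑ i ∈ Finset.Icc β b,
          z ^ m * (P i).eval z * (-L z) ^ (i - β) / (Nat.factorial (i - β)) = 0) :
    ∀ β ∈ Finset.Icc 1 b, μ β = 0 := by
  set c : ℕ → Polynomial ℂ := fun j =>
    ∑ β ∈ Finset.Icc 1 b,
      if β + j ≤ b then (μ β * (-1) ^ j / (Nat.factorial j : ℂ)) • (X ^ m * P (β + j))
      else 0 with hc_def
  -- Step A: transformed sum vanishes on the ball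
  have stepA : ∀ z ∈ Metric.ball z₁ ρ,
      ∑ j ∈ Finset.range (b - 1 + 1), (c j).eval z * (L z) ^ j = 0 := by
    intro z hz
    have hrange : b - 1 + 1 = b := by omega
    rw [hrange]
    have expand : ∀ j ∈ Finset.range b, (c j).eval z * (L z) ^ j =
        ∑ β ∈ Finset.Icc 1 b,
          (if β + j ≤ b then
            (μ β * (-1) ^ j / (Nat.factorial j : ℂ)) * ((X ^ m * P (β + j)).eval z) * (L z) ^ j
          else 0) := by
      intro j _
      rw [hc_def]
      simp only [eval_finset_sum, apply_ite (eval z), eval_smul, eval_zero, smul_eq_mul]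
      rw [Finset.sum_mul]
      refine Finset.sum_congr rfl fun β _ => ?_
      split <;> simp
    have perβ : ∀ β ∈ Finset.Icc 1 b,
        (∑ j ∈ Finset.range b,
          (if β + j ≤ b then
            (μ β * (-1) ^ j / (Nat.factorial j : ℂ)) * ((X ^ m * P (β + j)).eval z) * (L z) ^ j
          else 0)) =
        μ β * ∑ i ∈ Finset.Icc β b,
          z ^ m * (P i).eval z * (-L z) ^ (i - β) / (Nat.factorial (i - β)) := by
      intro β hβ
      obtain ⟨hβ1, hβb⟩ := Finset.mem_Icc.mp hβ
      have hfilter : (Finset.range b).filter (fun j => β + j ≤ b) =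
          Finset.range (b + 1 - β) := by
        ext j
        simp only [Finset.mem_filter, Finset.mem_range]
        omega
      calc ∑ j ∈ Finset.range b,
            (if β + j ≤ b then
              (μ β * (-1) ^ j / (Nat.factorial j : ℂ)) * ((X ^ m * P (β + j)).eval z) * (L z) ^ j
            else 0)
          = ∑ j ∈ (Finset.range b).filter (fun j => β + j ≤ b),
              (μ β * (-1) ^ j / (Nat.factorial j : ℂ)) * ((X ^ m * P (β + j)).eval z) *
                (L z) ^ j := by
            rw [Finset.sum_filter]
        _ = ∑ j ∈ Finset.range (b + 1 - β),
              (μ β * (-1) ^ j / (Nat.factorial j : ℂ)) * ((X ^ m * P (β + j)).eval z) *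
                (L z) ^ j := by
            rw [hfilter]
        _ = μ β * ∑ i ∈ Finset.Icc β b,
              z ^ m * (P i).eval z * (-L z) ^ (i - β) / (Nat.factorial (i - β)) := by
            rw [← Finset.Ico_add_one_right_eq_Icc, Finset.sum_Ico_eq_sum_range, Finset.mul_sum]
            refine Finset.sum_congr rfl fun j _ => ?_
            rw [Nat.add_sub_cancel_left, eval_mul, eval_pow, eval_X, neg_pow (L z) j]
            ring
    rw [Finset.sum_congr rfl expand, Finset.sum_comm, Finset.sum_congr rfl perβ]
    exact hsum z hz
  -- Step B: all the transformed polynomials vanish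
  have stepB : ∀ j ≤ b - 1, c j = 0 :=
    core z₁ ρ hρ hD L hL hLlog (b - 1) c stepA
  -- Step C: conclude by strong induction
  intro β
  induction β using Nat.strong_induction_on with
  | _ β IH =>
    intro hβ
    obtain ⟨h1, h2⟩ := Finset.mem_Icc.mp hβ
    have hj : b - β ≤ b - 1 := by omega
    have hcj : (∑ β' ∈ Finset.Icc 1 b,
        if β' + (b - β) ≤ b then
          (μ β' * (-1) ^ (b - β) / (Nat.factorial (b - β) : ℂ)) • (X ^ m * P (β' + (b - β)))
        else 0) = 0 := stepB (b - β) hj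
    have hsingle : ∑ β' ∈ Finset.Icc 1 b,
        (if β' + (b - β) ≤ b then
          (μ β' * (-1) ^ (b - β) / (Nat.factorial (b - β) : ℂ)) • (X ^ m * P (β' + (b - β)))
        else 0) =
        (μ β * (-1) ^ (b - β) / (Nat.factorial (b - β) : ℂ)) • (X ^ m * P b) := by
      rw [Finset.sum_eq_single β]
      · rw [if_pos (by omega : β + (b - β) ≤ b), show β + (b - β) = b by omega]
      · intro β' hβ' hne
        by_cases hle : β' + (b - β) ≤ b
        · have hlt : β' < β := by omega
          rw [if_pos hle, IH β' hlt hβ', zero_mul, zero_div, zero_smul]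
        · rw [if_neg hle]
      · intro h; exact absurd hβ h
    rw [hsingle] at hcj
    have hXP : (X ^ m * P b : Polynomial ℂ) ≠ 0 :=
      mul_ne_zero (pow_ne_zero m X_ne_zero) hPb
    rcases smul_eq_zero.mp hcj with hs | hs
    · rcases div_eq_zero_iff.mp hs with hs' | hs'
      · rcases mul_eq_zero.mp hs' with h | h
        · exact h
        · exact absurd h (pow_ne_zero _ (by norm_num))
      · exact absurd hs' (Nat.cast_ne_zero.mpr (Nat.factorial_ne_zero _))
    · exact absurd hs hXP
end

section
/- Let R, k, W be positive integers with R < k−1 and k+1 ≤ W. Then Σ_{t=R+1}^∞ C(t−R+k−2, k−1)·(R/t)^W ≤ R²·e^{k−1}·π²/6. -/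
lemma stmt19_pow_div_factorial_le_exp (m : ℕ) : (m : ℝ) ^ m / (m.factorial : ℝ) ≤ Real.exp m := by
  calc (m : ℝ) ^ m / (m.factorial : ℝ)
      ≤ ∑ i ∈ Finset.range (m + 1), (m : ℝ) ^ i / i.factorial :=
        Finset.single_le_sum (f := fun i => (m : ℝ) ^ i / i.factorial)
          (fun i _ => by positivity) (Finset.self_mem_range_succ m)
    _ ≤ Real.exp m := Real.sum_le_exp_of_nonneg (by positivity) _

lemma stmt19_term_bound (R k W : ℕ) (hR : 0 < R) (hRk : R + 1 < k) (hkW : k + 1 ≤ W) (s : ℕ) :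
    ((s + k - 1).choose (k - 1) : ℝ) * ((R : ℝ) / ((R : ℝ) + 1 + s)) ^ W ≤
      (R : ℝ) ^ 2 * Real.exp ((k : ℝ) - 1) * (1 / ((s : ℝ) + 1) ^ 2) := by
  set m := k - 1 with hm
  have hkm : k = m + 1 := by omega
  have hskm : s + k - 1 = s + m := by omega
  have hRm : (R : ℝ) ≤ m := by exact_mod_cast (by omega : R ≤ m)
  have hkc : ((k : ℝ) - 1) = (m : ℝ) := by rw [hkm]; push_cast; ring
  set t : ℝ := (R : ℝ) + 1 + s with hts
  have ht0 : 0 < t := by positivity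
  have hst : (s : ℝ) + 1 ≤ t := by
    have : (0:ℝ) ≤ R := by positivity
    rw [hts]; linarith
  have hr0 : 0 ≤ (R : ℝ) / t := by positivity
  have hr1 : (R : ℝ) / t ≤ 1 := by
    rw [div_le_one ht0, hts]; linarith [Nat.cast_nonneg (α := ℝ) s]
  have hWpow : ((R : ℝ) / t) ^ W ≤ ((R : ℝ) / t) ^ (m + 2) :=
    pow_le_pow_of_le_one hr0 hr1 (by omega)
  have hchoose : ((s + k - 1).choose (k - 1) : ℝ) ≤ ((s + m : ℕ) : ℝ) ^ m / (m.factorial : ℝ) := by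
    rw [hskm, hm]
    exact Nat.choose_le_pow_div m (s + m)
  have hE : (0:ℝ) < Real.exp m := Real.exp_pos _
  have hfac : (0:ℝ) < (m.factorial : ℝ) := by exact_mod_cast m.factorial_pos
  -- core inequality
  have hcore : ((s + m : ℕ) : ℝ) ^ m / (m.factorial : ℝ) * ((R : ℝ) / t) ^ (m + 2) ≤
      (R : ℝ) ^ 2 * Real.exp m * (1 / ((s : ℝ) + 1) ^ 2) := by
    have hA : (0:ℝ) ≤ ((s + m : ℕ) : ℝ) := Nat.cast_nonneg _
    push_cast
    rw [div_pow, div_mul_div_comm, mul_one_div, div_le_div_iff₀ (by positivity) (by positivity)]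
    have h1 : ((s : ℝ) + m) * R ≤ (m : ℝ) * t := by
      have hs0 : (0:ℝ) ≤ s := Nat.cast_nonneg _
      have hR0 : (0:ℝ) ≤ R := Nat.cast_nonneg _
      rw [hts]; nlinarith
    have hp : (((s : ℝ) + m) * R) ^ m ≤ ((m : ℝ) * t) ^ m :=
      pow_le_pow_left₀ (by positivity) h1 m
    have hp2 : ((s : ℝ) + m) ^ m * (R : ℝ) ^ m ≤ (m.factorial : ℝ) * Real.exp m * t ^ m := by
      rw [← mul_pow]
      calc (((s : ℝ) + m) * R) ^ m ≤ ((m : ℝ) * t) ^ m := hp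
        _ = (m : ℝ) ^ m * t ^ m := by rw [mul_pow]
        _ ≤ ((m.factorial : ℝ) * Real.exp m) * t ^ m := by
            have := stmt19_pow_div_factorial_le_exp m
            rw [div_le_iff₀ hfac] at this
            exact mul_le_mul_of_nonneg_right (by linarith) (by positivity)
    have hq : ((s : ℝ) + 1) ^ 2 ≤ t ^ 2 := by
      apply pow_le_pow_left₀ (by positivity) hst
    calc ((s : ℝ) + m) ^ m * (R : ℝ) ^ (m + 2) * ((s : ℝ) + 1) ^ 2
        = (((s : ℝ) + m) ^ m * (R : ℝ) ^ m) * ((R : ℝ) ^ 2 * ((s : ℝ) + 1) ^ 2) := by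
          ring
      _ ≤ ((m.factorial : ℝ) * Real.exp m * t ^ m) * ((R : ℝ) ^ 2 * t ^ 2) := by
          apply mul_le_mul hp2 (by gcongr) (by positivity) (by positivity)
      _ = (R : ℝ) ^ 2 * Real.exp m * ((m.factorial : ℝ) * t ^ (m + 2)) := by ring
  rw [hkc]
  calc ((s + k - 1).choose (k - 1) : ℝ) * ((R : ℝ) / t) ^ W
      ≤ ((s + m : ℕ) : ℝ) ^ m / (m.factorial : ℝ) * ((R : ℝ) / t) ^ (m + 2) := by
        apply mul_le_mul hchoose hWpow (by positivity) (by positivity)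
    _ ≤ (R : ℝ) ^ 2 * Real.exp m * (1 / ((s : ℝ) + 1) ^ 2) := hcore

/-- Eq. (eqmajolemasytemp) of the paper:
`∑_{t=R+1}^∞ C(t-R+k-2, k-1) (R/t)^W ≤ R² e^{k-1} π²/6` for positive integers
`R < k-1` and `W ≥ k+1` (the sum is reindexed by `t = R+1+s`, `s ∈ ℕ`). -/
theorem stmt19 (R k W : ℕ) (hR : 0 < R) (hk : 0 < k) (hW : 0 < W)
    (hRk : R + 1 < k) (hkW : k + 1 ≤ W) :
    ∑' s : ℕ, ((s + k - 1).choose (k - 1) : ℝ) * ((R : ℝ) / ((R : ℝ) + 1 + s)) ^ W ≤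
      (R : ℝ) ^ 2 * Real.exp ((k : ℝ) - 1) * Real.pi ^ 2 / 6 := by
  have key := stmt19_term_bound R k W hR hRk hkW
  have hshift : HasSum (fun s : ℕ => (1 : ℝ) / ((s : ℝ) + 1) ^ 2) (Real.pi ^ 2 / 6) := by
    have h := (hasSum_nat_add_iff (f := fun n : ℕ => (1 : ℝ) / (n : ℝ) ^ 2) 1).mpr
      (by simpa using hasSum_zeta_two)
    simpa [add_comm] using h
  have hsumR : Summable (fun s : ℕ =>
      (R : ℝ) ^ 2 * Real.exp ((k : ℝ) - 1) * (1 / ((s : ℝ) + 1) ^ 2)) :=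
    hshift.summable.mul_left _
  have hsumL : Summable (fun s : ℕ =>
      ((s + k - 1).choose (k - 1) : ℝ) * ((R : ℝ) / ((R : ℝ) + 1 + s)) ^ W) := by
    apply Summable.of_nonneg_of_le (fun s => by positivity) key hsumR
  calc ∑' s : ℕ, ((s + k - 1).choose (k - 1) : ℝ) * ((R : ℝ) / ((R : ℝ) + 1 + s)) ^ W
      ≤ ∑' s : ℕ, (R : ℝ) ^ 2 * Real.exp ((k : ℝ) - 1) * (1 / ((s : ℝ) + 1) ^ 2) :=
        Summable.tsum_le_tsum key hsumL hsumR
    _ = (R : ℝ) ^ 2 * Real.exp ((k : ℝ) - 1) * (Real.pi ^ 2 / 6) := by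
        rw [tsum_mul_left, hshift.tsum_eq]
    _ = (R : ℝ) ^ 2 * Real.exp ((k : ℝ) - 1) * Real.pi ^ 2 / 6 := by ring
end
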